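/- arXiv:1402.0917 — 9 statements merged into one kernel-verified Lean document; each statement's English description precedes it below -/
import Mathlib

section
/- Let P₁, P₂, P₃, P₄, P₅ ∈ ℝ² be the vertices of a convex pentagon. Then the area of the convex hull of {P₁, ..., P₅} is at most √5 times the maximum, over all triples 1 ≤ i < j < k ≤ 5, of the area of the triangle with vertices Pᵢ, Pⱼ, Pₖ. -/
open MeasureTheory

/-- Doubled signed area of the triangle `A B C`. -/
def dt (A B C : ℝ × ℝ) : ℝ := (B.1-A.1)*(C.2-A.2) - (B.2-A.2)*(C.1-A.1)

/-- Final 3-variable inequality. -/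
lemma core3 {x y z s : ℝ} (hs : s^2 = 5) (hs0 : 0 < s)
    (hx : 0 < x) (hx1 : x ≤ 1) (hy1 : y ≤ 1) (hz : 0 < z) (hz1 : z ≤ 1)
    (h1 : x * (y + z) ≤ 1) (h2 : z * (x + y) ≤ 1) :
    x + y + z ≤ s := by
  by_contra hc
  push_neg at hc
  have hs2 : 2 < s := by nlinarith
  have k1 : x*x - s*x + 1 > 0 := by nlinarith
  have k2 : z*z - s*z + 1 > 0 := by nlinarith
  have hxb : x < (s - 1) / 2 := by nlinarith
  have hzb : z < (s - 1) / 2 := by nlinarith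
  linarith

/-- Core 6-variable inequality. -/
lemma core6 {x y z p q r s : ℝ} (hs : s^2 = 5) (hs0 : 0 < s)
    (hx : 0 < x) (hy : 0 < y) (hz : 0 < z) (hp : 0 < p) (hq : 0 < q) (hr : 0 < r)
    (hx1 : x ≤ 1) (hy1 : y ≤ 1) (hz1 : z ≤ 1) (hp1 : p ≤ 1) (hq1 : q ≤ 1)
    (hQ : q ≤ 1 + r - x) (hP : p ≤ 1 + r - z)
    (hpl : x*z + r*y ≤ p*q) :
    x + y + z ≤ s := by
  have h1 : x * (y + z) ≤ 1 := by
    rcases le_total x r with h | h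
    · nlinarith
    · nlinarith
  have h2 : z * (x + y) ≤ 1 := by
    rcases le_total z r with h | h
    · nlinarith
    · nlinarith
  exact core3 hs hs0 hx hx1 hy1 hz hz1 h1 h2

def stdTri : Set (ℝ × ℝ) := {p | 0 ≤ p.1 ∧ 0 ≤ p.2 ∧ p.1 + p.2 ≤ 1}

lemma stdTri_measurable : MeasurableSet stdTri := by
  apply MeasurableSet.inter
  · exact measurableSet_le measurable_const measurable_fst
  apply MeasurableSet.inter
  · exact measurableSet_le measurable_const measurable_snd
  · exact measurableSet_le (measurable_fst.add measurable_snd) measurable_const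

lemma volume_stdTri : volume stdTri = ENNReal.ofReal (1/2) := by
  have h1 : (volume : Measure (ℝ × ℝ)) stdTri
      = ∫⁻ x : ℝ, volume (Prod.mk x ⁻¹' stdTri) := by
    rw [Measure.volume_eq_prod, Measure.prod_apply stdTri_measurable]
  rw [h1]
  have h2 : ∀ x : ℝ, volume (Prod.mk x ⁻¹' stdTri)
      = Set.indicator (Set.Icc (0:ℝ) 1) (fun x => ENNReal.ofReal (1 - x)) x := by
    intro x
    by_cases hx : x ∈ Set.Icc (0:ℝ) 1
    · have : Prod.mk x ⁻¹' stdTri = Set.Icc 0 (1 - x) := by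
        ext y; simp only [stdTri, Set.mem_preimage, Set.mem_setOf_eq, Set.mem_Icc]
        constructor
        · rintro ⟨_, h2, h3⟩; exact ⟨h2, by linarith⟩
        · rintro ⟨h2, h3⟩; exact ⟨hx.1, h2, by linarith⟩
      rw [this, Real.volume_Icc, Set.indicator_of_mem hx]
      norm_num
    · have : Prod.mk x ⁻¹' stdTri = ∅ := by
        ext y; simp only [stdTri, Set.mem_preimage, Set.mem_setOf_eq, Set.mem_empty_iff_false,
          iff_false]
        simp only [Set.mem_Icc, not_and_or, not_le] at hx
        rcases hx with h | h
        · rintro ⟨h1, _, _⟩; linarith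
        · rintro ⟨_, h2, h3⟩; linarith
      rw [this, Set.indicator_of_notMem hx, measure_empty]
  simp_rw [h2]
  rw [lintegral_indicator measurableSet_Icc _]
  rw [← ofReal_integral_eq_lintegral_ofReal]
  · have : ∫ x in Set.Icc (0:ℝ) 1, (1 - x) = 1/2 := by
      rw [MeasureTheory.integral_Icc_eq_integral_Ioc, ← intervalIntegral.integral_of_le zero_le_one]
      simp [intervalIntegral.integral_sub intervalIntegrable_const intervalIntegral.intervalIntegrable_id,
        integral_id]
      norm_num
    rw [this]
  · apply Continuous.integrableOn_Icc; continuity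
  · filter_upwards [self_mem_ae_restrict measurableSet_Icc] with x hx
    simp only [Set.mem_Icc] at hx
    simp only [Pi.zero_apply]
    linarith [hx.2]

lemma stdTri_eq_hull : stdTri = convexHull ℝ {((0:ℝ),(0:ℝ)), (1,0), (0,1)} := by
  apply Set.Subset.antisymm
  · rintro ⟨x, y⟩ ⟨h1, h2, h3⟩
    have := Finset.centerMass_mem_convexHull (Finset.univ : Finset (Fin 3))
      (w := ![1 - x - y, x, y]) (z := ![((0:ℝ),(0:ℝ)), (1,0), (0,1)])
      (s := {((0:ℝ),(0:ℝ)), (1,0), (0,1)})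
      (by intro i _; fin_cases i <;> simp <;> linarith)
      (by simp [Fin.sum_univ_three]; linarith)
      (by intro i _; fin_cases i <;> simp)
    have hc : (Finset.univ : Finset (Fin 3)).centerMass ![1-x-y,x,y]
        ![((0:ℝ),(0:ℝ)), (1,0), (0,1)] = (x, y) := by
      rw [Finset.centerMass_eq_of_sum_1]
      · simp [Fin.sum_univ_three, Prod.ext_iff]
      · simp [Fin.sum_univ_three]; ring
    rw [← hc]; exact this
  · apply convexHull_min
    · rintro p hp
      rcases hp with h | h | h <;> (rw [h]; constructor <;> norm_num)
    · rintro ⟨a1, a2⟩ ⟨h1, h2, h3⟩ ⟨b1, b2⟩ ⟨g1, g2, g3⟩ u v hu hv huv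
      simp only [stdTri, Set.mem_setOf_eq, Prod.fst_add, Prod.snd_add, Prod.smul_fst,
        Prod.smul_snd, smul_eq_mul] at *
      refine ⟨by nlinarith, by nlinarith, by nlinarith⟩

lemma volume_triangle (A B C : ℝ × ℝ) :
    volume (convexHull ℝ {A, B, C}) = ENNReal.ofReal (|dt A B C| / 2) := by
  set L : (ℝ × ℝ) →ₗ[ℝ] (ℝ × ℝ) :=
    Matrix.toLin (Module.Basis.finTwoProd ℝ) (Module.Basis.finTwoProd ℝ)
      !![B.1 - A.1, C.1 - A.1; B.2 - A.2, C.2 - A.2] with hL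
  have hdet : LinearMap.det L = dt A B C := by
    rw [hL, LinearMap.det_toLin, Matrix.det_fin_two_of, dt]; ring
  set f : (ℝ × ℝ) →ᵃ[ℝ] (ℝ × ℝ) :=
    { toFun := fun v => A + L v
      linear := L
      map_vadd' := by intro p v; simp only [vadd_eq_add, map_add]; abel } with hf
  have himg : convexHull ℝ {A, B, C} = f '' stdTri := by
    rw [stdTri_eq_hull, AffineMap.image_convexHull]
    congr 1
    simp only [Set.image_insert_eq, Set.image_singleton, hf, AffineMap.coe_mk]
    rw [Matrix.toLin_finTwoProd_apply, Matrix.toLin_finTwoProd_apply,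
      Matrix.toLin_finTwoProd_apply]
    rw [show A + ((B.1 - A.1) * 1 + (C.1 - A.1) * 0, (B.2 - A.2) * 1 + (C.2 - A.2) * 0) = B from
        by ext <;> simp,
      show A + ((B.1 - A.1) * 0 + (C.1 - A.1) * 1, (B.2 - A.2) * 0 + (C.2 - A.2) * 1) = C from
        by ext <;> simp,
      show A + ((B.1 - A.1) * 0 + (C.1 - A.1) * 0, (B.2 - A.2) * 0 + (C.2 - A.2) * 0) = A from
        by ext <;> simp]
  have himg2 : f '' stdTri = (A + ·) '' (L '' stdTri) := by
    rw [← Set.image_comp]; rfl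
  rw [himg, himg2]
  have htrans : volume ((A + ·) '' (L '' stdTri)) = volume (L '' stdTri) := by
    rw [Set.image_add_left, measure_preimage_add]
  rw [htrans, Measure.addHaar_image_linearMap, hdet, volume_stdTri,
    ← ENNReal.ofReal_mul (abs_nonneg _)]
  ring_nf

lemma mem_triangle {A B C X : ℝ × ℝ} (hΔ : 0 < dt A B C) (h1 : 0 ≤ dt X B C)
    (h2 : 0 ≤ dt A X C) (h3 : 0 ≤ dt A B X) : X ∈ convexHull ℝ ({A, B, C} : Set (ℝ × ℝ)) := by
  have hsum : dt X B C + dt A X C + dt A B X = dt A B C := by simp only [dt]; ring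
  have hc := Finset.centerMass_mem_convexHull (Finset.univ : Finset (Fin 3))
    (w := ![dt X B C / dt A B C, dt A X C / dt A B C, dt A B X / dt A B C])
    (z := ![A, B, C]) (s := {A, B, C})
    (by intro i _; fin_cases i <;> simp <;> positivity)
    (by simp [Fin.sum_univ_three]; field_simp; linarith)
    (by intro i _; fin_cases i <;> simp)
  have he : (Finset.univ : Finset (Fin 3)).centerMass
      ![dt X B C / dt A B C, dt A X C / dt A B C, dt A B X / dt A B C] ![A, B, C] = X := by
    rw [Finset.centerMass_eq_of_sum_1]
    · simp only [Fin.sum_univ_three, Matrix.cons_val_zero, Matrix.cons_val_one, Matrix.head_cons,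
        Matrix.cons_val_two, Matrix.tail_cons]
      ext
      · show (dt X B C / dt A B C) * A.1 + (dt A X C / dt A B C) * B.1
            + (dt A B X / dt A B C) * C.1 = X.1
        field_simp
        simp only [dt]; ring
      · show (dt X B C / dt A B C) * A.2 + (dt A X C / dt A B C) * B.2
            + (dt A B X / dt A B C) * C.2 = X.2
        field_simp
        simp only [dt]; ring
    · simp [Fin.sum_univ_three]; field_simp; linarith
  rw [← he]; exact hc

set_option maxHeartbeats 2000000 in
lemma pentagon_cover {A B C D E : ℝ × ℝ}
    (h1 : 0 < dt A B C) (h2 : 0 < dt A B D) (h3 : 0 < dt A B E)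
    (h4 : 0 < dt A C D) (h5 : 0 < dt A C E) (h6 : 0 < dt A D E)
    (h7 : 0 < dt B C D) (h8 : 0 < dt B C E) (h9 : 0 < dt B D E) (h10 : 0 < dt C D E) :
    convexHull ℝ ({A, B, C, D, E} : Set (ℝ × ℝ)) ⊆
      convexHull ℝ ({A, B, C} : Set (ℝ × ℝ)) ∪ convexHull ℝ ({A, C, D} : Set (ℝ × ℝ))
        ∪ convexHull ℝ ({A, D, E} : Set (ℝ × ℝ)) := by
  intro X hX
  have hrange : ({A, B, C, D, E} : Set (ℝ × ℝ)) = Set.range ![A, B, C, D, E] := by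
    simp only [Matrix.range_cons, Matrix.range_empty, Set.singleton_union, Set.union_empty]
  rw [hrange, convexHull_range_eq_exists_affineCombination] at hX
  obtain ⟨s, w, hw0, hw1, hXeq⟩ := hX
  set W : Fin 5 → ℝ := fun i => if i ∈ s then w i else 0 with hW
  have hW0 : ∀ i, 0 ≤ W i := by
    intro i; simp only [hW]; split
    · exact hw0 i ‹_›
    · exact le_rfl
  have hW1 : ∑ i, W i = 1 := by
    rw [← hw1]; simp only [hW]
    rw [Finset.sum_ite_mem, Finset.univ_inter]
  have hXsum : X = ∑ i, W i • ![A, B, C, D, E] i := by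
    rw [← hXeq, Finset.affineCombination_eq_linear_combination s _ _ hw1]
    simp only [hW, ite_smul, zero_smul]
    rw [Finset.sum_ite_mem, Finset.univ_inter]
  have hX1 : X.1 = W 0 * A.1 + W 1 * B.1 + W 2 * C.1 + W 3 * D.1 + W 4 * E.1 := by
    rw [hXsum]; simp [Fin.sum_univ_five]
  have hX2 : X.2 = W 0 * A.2 + W 1 * B.2 + W 2 * C.2 + W 3 * D.2 + W 4 * E.2 := by
    rw [hXsum]; simp [Fin.sum_univ_five]
  have hw00 : W 0 = 1 - W 1 - W 2 - W 3 - W 4 := by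
    have := hW1; rw [Fin.sum_univ_five] at this; linarith
  have w0 := hW0 0; have w1 := hW0 1; have w2 := hW0 2; have w3 := hW0 3; have w4 := hW0 4
  rcases le_or_gt (dt A C X) 0 with hACX | hACX
  · left; left
    apply mem_triangle h1
    · have hid : dt X B C = W 0 * dt A B C + W 3 * dt B C D + W 4 * dt B C E := by
        simp only [dt]; rw [hX1, hX2, hw00]; ring
      rw [hid]; have := mul_nonneg w0 h1.le; have := mul_nonneg w3 h7.le
      have := mul_nonneg w4 h8.le
      rw [hw00]; nlinarith [mul_nonneg w3 h7.le, mul_nonneg w4 h8.le]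
    · have : dt A X C = - dt A C X := by simp only [dt]; ring
      rw [this]; linarith
    · have hid : dt A B X = W 2 * dt A B C + W 3 * dt A B D + W 4 * dt A B E := by
        simp only [dt]; rw [hX1, hX2, hw00]; ring
      rw [hid]
      nlinarith [mul_nonneg w2 h1.le, mul_nonneg w3 h2.le, mul_nonneg w4 h3.le]
  rcases le_or_gt 0 (dt A D X) with hADX | hADX
  · right
    apply mem_triangle h6
    · have hid : dt X D E = W 0 * dt A D E + W 1 * dt B D E + W 2 * dt C D E := by
        simp only [dt]; rw [hX1, hX2, hw00]; ring
      rw [hid]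
      nlinarith [mul_nonneg w0 h6.le, mul_nonneg w1 h9.le, mul_nonneg w2 h10.le]
    · have hid : dt A X E = W 1 * dt A B E + W 2 * dt A C E + W 3 * dt A D E := by
        simp only [dt]; rw [hX1, hX2, hw00]; ring
      rw [hid]
      nlinarith [mul_nonneg w1 h3.le, mul_nonneg w2 h5.le, mul_nonneg w3 h6.le]
    · exact hADX
  · left; right
    apply mem_triangle h4
    · have hid : dt X C D = W 0 * dt A C D + W 1 * dt B C D + W 4 * dt C D E := by
        simp only [dt]; rw [hX1, hX2, hw00]; ring
      rw [hid]
      nlinarith [mul_nonneg w0 h4.le, mul_nonneg w1 h7.le, mul_nonneg w4 h10.le]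
    · have : dt A X D = - dt A D X := by simp only [dt]; ring
      rw [this]; linarith
    · exact hACX.le

lemma collinear_cases {A B C : ℝ × ℝ} (h0 : dt A B C = 0) (hAB : A ≠ B) :
    A ∈ convexHull ℝ ({B, C} : Set (ℝ × ℝ)) ∨ B ∈ convexHull ℝ ({A, C} : Set (ℝ × ℝ))
      ∨ C ∈ convexHull ℝ ({A, B} : Set (ℝ × ℝ)) := by
  have hBA : B - A ≠ 0 := sub_ne_zero.2 (Ne.symm hAB)
  obtain ⟨t, ht⟩ : ∃ t : ℝ, C - A = t • (B - A) := by
    rcases eq_or_ne (B.1 - A.1) 0 with h1 | h1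
    · have h2 : B.2 - A.2 ≠ 0 := by
        intro h2; apply hBA; ext
        · simpa using h1
        · simpa using h2
      refine ⟨(C.2 - A.2) / (B.2 - A.2), ?_⟩
      have hc1 : (B.2 - A.2) * (C.1 - A.1) = 0 := by
        simp only [dt] at h0; linear_combination -h0 + (C.2 - A.2) * h1
      have hc1' : C.1 - A.1 = 0 := (mul_eq_zero.1 hc1).resolve_left h2
      ext
      · simp only [Prod.fst_sub, Prod.smul_fst, smul_eq_mul]
        rw [show C.1 - A.1 = (0:ℝ) from hc1', show B.1 - A.1 = (0:ℝ) from h1]; ring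
      · simp only [Prod.snd_sub, Prod.smul_snd, smul_eq_mul]; field_simp
    · refine ⟨(C.1 - A.1) / (B.1 - A.1), ?_⟩
      ext
      · simp only [Prod.fst_sub, Prod.smul_fst, smul_eq_mul]; field_simp
      · simp only [Prod.snd_sub, Prod.smul_snd, smul_eq_mul]
        simp only [dt] at h0
        field_simp
        nlinarith [h0]
  have hCA : C = A + t • (B - A) := by rw [← ht]; abel
  rcases le_or_gt t 0 with h | h
  · left
    rw [convexHull_pair]
    have h1t : (1 : ℝ) - t ≠ 0 := by intro hh; linarith
    refine ⟨-t / (1 - t), 1 / (1 - t), div_nonneg (by linarith) (by linarith),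
      div_nonneg one_pos.le (by linarith), ?_, ?_⟩
    · field_simp; ring
    · rw [hCA]; ext
      · simp only [Prod.fst_add, Prod.smul_fst, smul_eq_mul, Prod.fst_sub]; field_simp; ring
      · simp only [Prod.snd_add, Prod.smul_snd, smul_eq_mul, Prod.snd_sub]; field_simp; ring
  rcases le_or_gt t 1 with h1 | h1
  · right; right
    rw [convexHull_pair]
    refine ⟨1 - t, t, by linarith, h.le, by ring, ?_⟩
    rw [hCA]; ext
    · simp only [Prod.fst_add, Prod.smul_fst, smul_eq_mul, Prod.fst_sub]; ring
    · simp only [Prod.snd_add, Prod.smul_snd, smul_eq_mul, Prod.snd_sub]; ring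
  · right; left
    rw [convexHull_pair]
    have ht0 : t ≠ 0 := by linarith
    refine ⟨1 - 1/t, 1/t, by rw [sub_nonneg, div_le_one (by linarith)]; linarith,
      by positivity, by ring, ?_⟩
    rw [hCA]; ext
    · simp only [Prod.fst_add, Prod.smul_fst, smul_eq_mul, Prod.fst_sub]; field_simp; ring
    · simp only [Prod.snd_add, Prod.smul_snd, smul_eq_mul, Prod.snd_sub]; field_simp; ring

lemma hull_sub (P : Fin 5 → ℝ × ℝ) {i a b c : Fin 5} (ha : a ≠ i) (hb : b ≠ i) (hc : c ≠ i) :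
    ({P a, P b, P c} : Set (ℝ × ℝ)) ⊆ P '' {j | j ≠ i} := by
  rintro x (rfl | rfl | rfl)
  · exact ⟨a, ha, rfl⟩
  · exact ⟨b, hb, rfl⟩
  · exact ⟨c, hc, rfl⟩

lemma hull_sub2 (P : Fin 5 → ℝ × ℝ) {i a b : Fin 5} (ha : a ≠ i) (hb : b ≠ i) :
    ({P a, P b} : Set (ℝ × ℝ)) ⊆ P '' {j | j ≠ i} := by
  rintro x (rfl | rfl)
  · exact ⟨a, ha, rfl⟩
  · exact ⟨b, hb, rfl⟩

lemma dt_ne {P : Fin 5 → ℝ × ℝ} (hinj : Function.Injective P)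
    (hconv : ∀ i, P i ∉ convexHull ℝ (P '' {j | j ≠ i}))
    {a b c : Fin 5} (hab : a ≠ b) (hac : a ≠ c) (hbc : b ≠ c) :
    dt (P a) (P b) (P c) ≠ 0 := by
  intro h0
  have hAB : P a ≠ P b := fun h => hab (hinj h)
  rcases collinear_cases h0 hAB with h | h | h
  · exact hconv a (convexHull_mono (hull_sub2 P hab.symm hac.symm) h)
  · exact hconv b (convexHull_mono (hull_sub2 P hab hbc.symm) h)
  · exact hconv c (convexHull_mono (hull_sub2 P hac hbc) h)

lemma exists_convex_order (P : Fin 5 → ℝ × ℝ) (hinj : Function.Injective P)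
    (hconv : ∀ i, P i ∉ convexHull ℝ (P '' {j | j ≠ i})) :
    ∃ e : Fin 5 → Fin 5, Function.Bijective e ∧
      ∀ i j k : Fin 5, i < j → j < k → 0 < dt (P (e i)) (P (e j)) (P (e k)) := by
  classical
  -- separation of P 0 from the others
  have hfin : (P '' {j | j ≠ 0}).Finite := (Set.finite_range P).subset (Set.image_subset_range _ _)
  obtain ⟨f, u, hfu, hux⟩ := geometric_hahn_banach_closed_point
    (convex_convexHull ℝ _) (hfin.isCompact_convexHull ℝ).isClosed (hconv 0)
  set a : ℝ := f (1, 0) with ha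
  set b : ℝ := f (0, 1) with hb
  have flin : ∀ v : ℝ × ℝ, f v = a * v.1 + b * v.2 := by
    intro v
    have : v = v.1 • ((1:ℝ), (0:ℝ)) + v.2 • ((0:ℝ), (1:ℝ)) := by
      ext <;> simp
    rw [this, map_add, f.map_smul, f.map_smul]
    simp only [smul_eq_mul, ha, hb, Prod.fst_add, Prod.snd_add, Prod.smul_fst,
      Prod.smul_snd, Prod.fst, Prod.snd]
    ring
  have hFneg : ∀ j : Fin 5, j ≠ 0 → f (P j) < u :=
    fun j hj => hfu _ (subset_convexHull ℝ _ ⟨j, hj, rfl⟩)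
  set F : Fin 5 → ℝ := fun j => a * ((P j).1 - (P 0).1) + b * ((P j).2 - (P 0).2) with hFdef
  set G : Fin 5 → ℝ := fun j => a * ((P j).2 - (P 0).2) - b * ((P j).1 - (P 0).1) with hGdef
  have hF : ∀ j, j ≠ 0 → F j < 0 := by
    intro j hj
    have h1 := hFneg j hj
    have e1 := flin (P j); have e2 := flin (P 0)
    simp only [hFdef]
    nlinarith [hux]
  set key : Fin 5 → ℝ := fun j => G j / F j with hkey
  have hsq : ∀ j k : Fin 5, F j * G k - G j * F k = (a^2 + b^2) * dt (P 0) (P j) (P k) := by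
    intro j k; simp only [hFdef, hGdef, dt]; ring
  have hab2 : 0 < a^2 + b^2 := by
    rcases lt_or_ge 0 (a^2+b^2) with h | h
    · exact h
    · exfalso
      have ha0 : a = 0 := by nlinarith [sq_nonneg a, sq_nonneg b]
      have hb0 : b = 0 := by nlinarith [sq_nonneg a, sq_nonneg b]
      have := hF 1 (by decide)
      rw [hFdef] at this
      simp [ha0, hb0] at this
  have keylt : ∀ j k : Fin 5, j ≠ 0 → k ≠ 0 →
      (key j < key k ↔ 0 < dt (P 0) (P j) (P k)) := by
    intro j k hj hk
    have hFj := hF j hj; have hFk := hF k hk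
    have hpos : 0 < F j * F k := mul_pos_of_neg_of_neg hFj hFk
    have key_sub : key k - key j = (F j * G k - G j * F k) / (F j * F k) := by
      simp only [hkey]
      rw [div_sub_div _ _ hFk.ne hFj.ne,
        show G k * F j - F k * G j = F j * G k - G j * F k from by ring,
        show F k * F j = F j * F k from by ring]
    constructor
    · intro h
      have h3 : 0 < (key k - key j) * (F j * F k) := mul_pos (by linarith) hpos
      rw [key_sub, div_mul_cancel₀ _ (ne_of_gt hpos)] at h3
      nlinarith [hsq j k]
    · intro h
      have h4 : 0 < F j * G k - G j * F k := by nlinarith [hsq j k]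
      have h5 := div_pos h4 hpos
      rw [← key_sub] at h5; linarith
  have keyinj : ∀ j k : Fin 5, j ≠ 0 → k ≠ 0 → j ≠ k → key j ≠ key k := by
    intro j k hj hk hjk he
    have hFj := (hF j hj).ne; have hFk := (hF k hk).ne
    have hGj : G j = key j * F j := by simp only [hkey]; field_simp [hFj]
    have hGk : G k = key k * F k := by simp only [hkey]; field_simp [hFk]
    have h0 : F j * G k - G j * F k = 0 := by rw [hGj, hGk, he]; ring
    rw [hsq j k] at h0
    have : dt (P 0) (P j) (P k) = 0 := by
      rcases mul_eq_zero.1 h0 with h | h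
      · exact absurd h (ne_of_gt hab2)
      · exact h
    exact dt_ne hinj hconv (Ne.symm hj) (Ne.symm hk) hjk this
  -- sort the other four points by key
  set keyf : Fin 4 → ℝ := fun i => key i.succ with hkeyf
  set σ := Tuple.sort keyf with hσ
  have hmono : Monotone (keyf ∘ σ) := Tuple.monotone_sort keyf
  have hinj4 : Function.Injective (keyf ∘ σ) := by
    intro i j hij
    by_contra hne
    exact keyinj (σ i).succ (σ j).succ (Fin.succ_ne_zero _) (Fin.succ_ne_zero _)
      (by simp only [ne_eq, Fin.succ_inj, EmbeddingLike.apply_eq_iff_eq]; exact hne) hij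
  have hsm : StrictMono (keyf ∘ σ) := hmono.strictMono_of_injective hinj4
  -- the ordering
  refine ⟨Fin.cons 0 (fun i => (σ i).succ), ?_, ?_⟩
  · rw [Finite.injective_iff_bijective.symm]
    intro x y hxy
    induction x using Fin.cases with
    | zero =>
      induction y using Fin.cases with
      | zero => rfl
      | succ y' => exact absurd hxy.symm (Fin.succ_ne_zero _)
    | succ x' =>
      induction y using Fin.cases with
      | zero => exact absurd hxy (by simpa using Fin.succ_ne_zero (σ x'))
      | succ y' =>
        simp only [Fin.cons_succ] at hxy
        congr
        exact σ.injective (Fin.succ_injective _ hxy)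
  · -- positivity of all oriented triples
    have hpos0 : ∀ i j : Fin 4, i < j →
        0 < dt (P 0) (P (σ i).succ) (P (σ j).succ) := by
      intro i j hij
      exact (keylt _ _ (Fin.succ_ne_zero _) (Fin.succ_ne_zero _)).1 (hsm hij)
    have hpos1 : ∀ i j k : Fin 4, i < j → j < k →
        0 < dt (P (σ i).succ) (P (σ j).succ) (P (σ k).succ) := by
      intro i j k hij hjk
      have d12 := hpos0 i j hij
      have d23 := hpos0 j k hjk
      have d13 := hpos0 i k (hij.trans hjk)
      by_contra hc
      push_neg at hc
      have hne12 : (σ i).succ ≠ (σ j).succ := by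
        simp only [ne_eq, Fin.succ_inj, EmbeddingLike.apply_eq_iff_eq]; exact hij.ne
      have hne23 : (σ j).succ ≠ (σ k).succ := by
        simp only [ne_eq, Fin.succ_inj, EmbeddingLike.apply_eq_iff_eq]; exact hjk.ne
      have hne13 : (σ i).succ ≠ (σ k).succ := by
        simp only [ne_eq, Fin.succ_inj, EmbeddingLike.apply_eq_iff_eq]; exact (hij.trans hjk).ne
      have hlt : dt (P (σ i).succ) (P (σ j).succ) (P (σ k).succ) < 0 :=
        lt_of_le_of_ne hc (dt_ne hinj hconv hne12 hne13 hne23)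
      have hmem : P (σ j).succ ∈ convexHull ℝ
          ({P 0, P (σ i).succ, P (σ k).succ} : Set (ℝ × ℝ)) := by
        apply mem_triangle d13
        · have : dt (P (σ j).succ) (P (σ i).succ) (P (σ k).succ)
              = - dt (P (σ i).succ) (P (σ j).succ) (P (σ k).succ) := by
            simp only [dt]; ring
          rw [this]; linarith
        · exact d23.le
        · exact d12.le
      exact hconv (σ j).succ (convexHull_mono
        (hull_sub P (Fin.succ_ne_zero _).symm hne12 hne23.symm) hmem)
    intro i j k hij hjk
    induction i using Fin.cases with
    | succ i' =>
      have hj0 : j ≠ 0 := by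
        intro h; rw [h] at hij; exact absurd hij (Fin.not_lt_zero _)
      have hk0 : k ≠ 0 := by
        intro h; rw [h] at hjk; exact absurd hjk (Fin.not_lt_zero _)
      rw [← Fin.succ_pred j hj0] at hij hjk ⊢
      rw [← Fin.succ_pred k hk0] at hjk ⊢
      simp only [Fin.cons_succ]
      apply hpos1
      · exact (Fin.succ_lt_succ_iff).1 hij
      · exact (Fin.succ_lt_succ_iff).1 hjk
    | zero =>
      have hj0 : j ≠ 0 := hij.ne.symm
      have hk0 : k ≠ 0 := (hij.trans hjk).ne.symm
      rw [← Fin.succ_pred j hj0] at hjk ⊢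
      rw [← Fin.succ_pred k hk0] at hjk ⊢
      simp only [Fin.cons_succ, Fin.cons_zero]
      apply hpos0
      exact (Fin.succ_lt_succ_iff).1 hjk

/-- Any triangle on three distinct vertices is dominated by the indexed supremum. -/
lemma le_iSup_tri (P : Fin 5 → ℝ × ℝ) {a b c : Fin 5} (hab : a ≠ b) (hac : a ≠ c)
    (hbc : b ≠ c) :
    volume (convexHull ℝ ({P a, P b, P c} : Set (ℝ × ℝ))) ≤
      ⨆ (i : Fin 5) (j : Fin 5) (k : Fin 5) (_ : i < j ∧ j < k),
        volume (convexHull ℝ ({P i, P j, P k} : Set (ℝ × ℝ))) := by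
  have key : ∀ i j k : Fin 5, i < j → j < k → ({P a, P b, P c} : Set (ℝ × ℝ))
      = {P i, P j, P k} →
      volume (convexHull ℝ ({P a, P b, P c} : Set (ℝ × ℝ))) ≤
      ⨆ (i : Fin 5) (j : Fin 5) (k : Fin 5) (_ : i < j ∧ j < k),
        volume (convexHull ℝ ({P i, P j, P k} : Set (ℝ × ℝ))) := by
    intro i j k hij hjk hset
    rw [hset]
    exact le_iSup_of_le i (le_iSup_of_le j (le_iSup_of_le k
      (le_iSup_of_le ⟨hij, hjk⟩ le_rfl)))
  rcases lt_trichotomy a b with h1 | h1 | h1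
  · rcases lt_trichotomy b c with h2 | h2 | h2
    · exact key a b c h1 h2 rfl
    · exact absurd h2 hbc
    · rcases lt_trichotomy a c with h3 | h3 | h3
      · exact key a c b h3 h2 (by ext x; simp; tauto)
      · exact absurd h3 hac
      · exact key c a b h3 h1 (by ext x; simp; tauto)
  · exact absurd h1 hab
  · rcases lt_trichotomy a c with h2 | h2 | h2
    · exact key b a c h1 h2 (by ext x; simp; tauto)
    · exact absurd h2 hac
    · rcases lt_trichotomy b c with h3 | h3 | h3
      · exact key b c a h3 h2 (by ext x; simp; tauto)
      · exact absurd h3 hbc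
      · exact key c b a h3 h1 (by ext x; simp; tauto)

set_option maxHeartbeats 4000000 in
/-- The area of a convex pentagon is at most `√5` times the maximum area of a
triangle with vertices among its vertices. -/
theorem pentagon_area_le_sqrt_five_mul_max_triangle
    (P : Fin 5 → ℝ × ℝ)
    (hinj : Function.Injective P)
    (hconv : ∀ i, P i ∉ convexHull ℝ (P '' {j | j ≠ i})) :
    volume (convexHull ℝ (Set.range P)) ≤
      ENNReal.ofReal (Real.sqrt 5) *
        ⨆ (i : Fin 5) (j : Fin 5) (k : Fin 5) (_ : i < j ∧ j < k),
          volume (convexHull ℝ ({P i, P j, P k} : Set (ℝ × ℝ))) := by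
  obtain ⟨e, hbij, hord⟩ := exists_convex_order P hinj hconv
  set Q : Fin 5 → ℝ × ℝ := fun i => P (e i) with hQdef
  -- the ten positive determinants
  have d1 : 0 < dt (Q 0) (Q 1) (Q 2) := hord 0 1 2 (by decide) (by decide)
  have hp' : 0 < dt (Q 0) (Q 1) (Q 3) := hord 0 1 3 (by decide) (by decide)
  have hr' : 0 < dt (Q 0) (Q 1) (Q 4) := hord 0 1 4 (by decide) (by decide)
  have d2 : 0 < dt (Q 0) (Q 2) (Q 3) := hord 0 2 3 (by decide) (by decide)
  have hq' : 0 < dt (Q 0) (Q 2) (Q 4) := hord 0 2 4 (by decide) (by decide)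
  have d3 : 0 < dt (Q 0) (Q 3) (Q 4) := hord 0 3 4 (by decide) (by decide)
  have t1 : 0 < dt (Q 1) (Q 2) (Q 3) := hord 1 2 3 (by decide) (by decide)
  have t2 : 0 < dt (Q 1) (Q 2) (Q 4) := hord 1 2 4 (by decide) (by decide)
  have t3 : 0 < dt (Q 1) (Q 3) (Q 4) := hord 1 3 4 (by decide) (by decide)
  have t4 : 0 < dt (Q 2) (Q 3) (Q 4) := hord 2 3 4 (by decide) (by decide)
  -- the maximum of the ten triangle (doubled) areas
  set m : ℝ := max (dt (Q 0) (Q 1) (Q 2)) (max (dt (Q 0) (Q 1) (Q 3))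
    (max (dt (Q 0) (Q 1) (Q 4)) (max (dt (Q 0) (Q 2) (Q 3)) (max (dt (Q 0) (Q 2) (Q 4))
    (max (dt (Q 0) (Q 3) (Q 4)) (max (dt (Q 1) (Q 2) (Q 3)) (max (dt (Q 1) (Q 2) (Q 4))
    (max (dt (Q 1) (Q 3) (Q 4)) (dt (Q 2) (Q 3) (Q 4)))))))))) with hmdef
  have hm0 : 0 < m := lt_of_lt_of_le d1 (le_max_left _ _)
  have hle1 : dt (Q 0) (Q 1) (Q 2) ≤ m := le_max_left _ _
  have hle2 : dt (Q 0) (Q 1) (Q 3) ≤ m := by rw [hmdef]; simp [le_max_iff]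
  have hle3 : dt (Q 0) (Q 1) (Q 4) ≤ m := by rw [hmdef]; simp [le_max_iff]
  have hle4 : dt (Q 0) (Q 2) (Q 3) ≤ m := by rw [hmdef]; simp [le_max_iff]
  have hle5 : dt (Q 0) (Q 2) (Q 4) ≤ m := by rw [hmdef]; simp [le_max_iff]
  have hle6 : dt (Q 0) (Q 3) (Q 4) ≤ m := by rw [hmdef]; simp [le_max_iff]
  have hle8 : dt (Q 1) (Q 2) (Q 4) ≤ m := by rw [hmdef]; simp [le_max_iff]
  have hle9 : dt (Q 1) (Q 3) (Q 4) ≤ m := by rw [hmdef]; simp [le_max_iff]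
  have hs : Real.sqrt 5 ^ 2 = 5 := Real.sq_sqrt (by norm_num)
  have hs0 : 0 < Real.sqrt 5 := Real.sqrt_pos.2 (by norm_num)
  -- the core inequality, applied to the normalized determinants
  have hkey : dt (Q 0) (Q 1) (Q 2) + dt (Q 0) (Q 2) (Q 3) + dt (Q 0) (Q 3) (Q 4)
      ≤ Real.sqrt 5 * m := by
    have ht2id : dt (Q 1) (Q 2) (Q 4) = dt (Q 0) (Q 1) (Q 2) + dt (Q 0) (Q 2) (Q 4)
        - dt (Q 0) (Q 1) (Q 4) := by simp only [dt]; ring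
    have ht3id : dt (Q 1) (Q 3) (Q 4) = dt (Q 0) (Q 3) (Q 4) + dt (Q 0) (Q 1) (Q 3)
        - dt (Q 0) (Q 1) (Q 4) := by simp only [dt]; ring
    have hplk : dt (Q 0) (Q 1) (Q 2) * dt (Q 0) (Q 3) (Q 4)
        + dt (Q 0) (Q 1) (Q 4) * dt (Q 0) (Q 2) (Q 3)
        = dt (Q 0) (Q 1) (Q 3) * dt (Q 0) (Q 2) (Q 4) := by simp only [dt]; ring
    have expand : ∀ u v w : ℝ, u + v - w ≤ m → v / m ≤ 1 + w / m - u / m := by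
      intro u v w h
      have h2 : (m + w - u - v) / m = 1 + w / m - u / m - v / m := by
        field_simp
      have h3 := div_nonneg (by linarith : (0:ℝ) ≤ m + w - u - v) hm0.le
      rw [h2] at h3
      linarith
    have happ := core6 (x := dt (Q 0) (Q 1) (Q 2) / m) (y := dt (Q 0) (Q 2) (Q 3) / m)
      (z := dt (Q 0) (Q 3) (Q 4) / m) (p := dt (Q 0) (Q 1) (Q 3) / m)
      (q := dt (Q 0) (Q 2) (Q 4) / m) (r := dt (Q 0) (Q 1) (Q 4) / m)
      hs hs0 (div_pos d1 hm0) (div_pos d2 hm0) (div_pos d3 hm0) (div_pos hp' hm0)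
      (div_pos hq' hm0) (div_pos hr' hm0)
      ((div_le_one hm0).2 hle1) ((div_le_one hm0).2 hle4) ((div_le_one hm0).2 hle6)
      ((div_le_one hm0).2 hle2) ((div_le_one hm0).2 hle5)
      (expand _ _ _ (by rw [← ht2id]; exact hle8))
      (expand _ _ _ (by rw [show dt (Q 0) (Q 3) (Q 4) + dt (Q 0) (Q 1) (Q 3)
          - dt (Q 0) (Q 1) (Q 4) = dt (Q 1) (Q 3) (Q 4) from ht3id.symm]; exact hle9))
      (by rw [div_mul_div_comm, div_mul_div_comm, div_mul_div_comm, ← add_div]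
          exact le_of_eq (by rw [hplk]))
    have hdiv : (dt (Q 0) (Q 1) (Q 2) + dt (Q 0) (Q 2) (Q 3) + dt (Q 0) (Q 3) (Q 4)) / m
        ≤ Real.sqrt 5 := by rw [add_div, add_div]; exact happ
    calc dt (Q 0) (Q 1) (Q 2) + dt (Q 0) (Q 2) (Q 3) + dt (Q 0) (Q 3) (Q 4)
        = (dt (Q 0) (Q 1) (Q 2) + dt (Q 0) (Q 2) (Q 3) + dt (Q 0) (Q 3) (Q 4)) / m * m := by
          field_simp
      _ ≤ Real.sqrt 5 * m := mul_le_mul_of_nonneg_right hdiv hm0.le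
  -- the pentagon is covered by three triangles
  have hrange : Set.range P = ({Q 0, Q 1, Q 2, Q 3, Q 4} : Set (ℝ × ℝ)) := by
    have hr0 : Set.range Q = Set.range P := by
      ext x; constructor
      · rintro ⟨i, rfl⟩; exact ⟨e i, rfl⟩
      · rintro ⟨i, rfl⟩; obtain ⟨j, rfl⟩ := hbij.2 i; exact ⟨j, rfl⟩
    rw [← hr0]
    ext x
    constructor
    · rintro ⟨i, rfl⟩; fin_cases i <;> simp
    · rintro (rfl | rfl | rfl | rfl | rfl) <;> [exact ⟨0, rfl⟩; exact ⟨1, rfl⟩;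
        exact ⟨2, rfl⟩; exact ⟨3, rfl⟩; exact ⟨4, rfl⟩]
  have hvol : volume (convexHull ℝ (Set.range P)) ≤
      ENNReal.ofReal (dt (Q 0) (Q 1) (Q 2) / 2) + ENNReal.ofReal (dt (Q 0) (Q 2) (Q 3) / 2)
        + ENNReal.ofReal (dt (Q 0) (Q 3) (Q 4) / 2) := by
    rw [hrange]
    refine le_trans (measure_mono (pentagon_cover d1 hp' hr' d2 hq' d3 t1 t2 t3 t4)) ?_
    refine le_trans (measure_union_le _ _) ?_
    refine add_le_add (le_trans (measure_union_le _ _) (add_le_add ?_ ?_)) ?_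
    · rw [volume_triangle, abs_of_pos d1]
    · rw [volume_triangle, abs_of_pos d2]
    · rw [volume_triangle, abs_of_pos d3]
  -- the sup dominates `m / 2`
  have htri : ∀ a b c : Fin 5, 0 < dt (Q a) (Q b) (Q c) → a ≠ b → a ≠ c → b ≠ c →
      ENNReal.ofReal (dt (Q a) (Q b) (Q c) / 2) ≤
      ⨆ (i : Fin 5) (j : Fin 5) (k : Fin 5) (_ : i < j ∧ j < k),
        volume (convexHull ℝ ({P i, P j, P k} : Set (ℝ × ℝ))) := by
    intro a b c hpos hab hac hbc
    have : ENNReal.ofReal (dt (Q a) (Q b) (Q c) / 2)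
        = volume (convexHull ℝ ({P (e a), P (e b), P (e c)} : Set (ℝ × ℝ))) := by
      rw [volume_triangle]
      congr 1
      rw [abs_of_pos hpos]
    rw [this]
    exact le_iSup_tri P (hbij.1.ne hab) (hbij.1.ne hac) (hbij.1.ne hbc)
  have hsup : ENNReal.ofReal (m / 2) ≤
      ⨆ (i : Fin 5) (j : Fin 5) (k : Fin 5) (_ : i < j ∧ j < k),
        volume (convexHull ℝ ({P i, P j, P k} : Set (ℝ × ℝ))) := by
    have hmax2 : ∀ a b : ℝ, max a b / 2 = max (a / 2) (b / 2) := by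
      intro a b
      rcases le_total a b with h | h
      · rw [max_eq_right h, max_eq_right (by linarith)]
      · rw [max_eq_left h, max_eq_left (by linarith)]
    have hofmax : ∀ a b : ℝ, ENNReal.ofReal (max a b) =
        max (ENNReal.ofReal a) (ENNReal.ofReal b) := by
      intro a b
      rcases le_total a b with h | h
      · rw [max_eq_right h, max_eq_right (ENNReal.ofReal_le_ofReal h)]
      · rw [max_eq_left h, max_eq_left (ENNReal.ofReal_le_ofReal h)]
    rw [hmdef]
    simp only [hmax2, hofmax, max_le_iff]
    refine ⟨htri 0 1 2 d1 (by decide) (by decide) (by decide),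
      htri 0 1 3 hp' (by decide) (by decide) (by decide),
      htri 0 1 4 hr' (by decide) (by decide) (by decide),
      htri 0 2 3 d2 (by decide) (by decide) (by decide),
      htri 0 2 4 hq' (by decide) (by decide) (by decide),
      htri 0 3 4 d3 (by decide) (by decide) (by decide),
      htri 1 2 3 t1 (by decide) (by decide) (by decide),
      htri 1 2 4 t2 (by decide) (by decide) (by decide),
      htri 1 3 4 t3 (by decide) (by decide) (by decide),
      htri 2 3 4 t4 (by decide) (by decide) (by decide)⟩
  -- put everything together
  calc volume (convexHull ℝ (Set.range P))
      ≤ ENNReal.ofReal (dt (Q 0) (Q 1) (Q 2) / 2) + ENNReal.ofReal (dt (Q 0) (Q 2) (Q 3) / 2)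
        + ENNReal.ofReal (dt (Q 0) (Q 3) (Q 4) / 2) := hvol
    _ = ENNReal.ofReal ((dt (Q 0) (Q 1) (Q 2) + dt (Q 0) (Q 2) (Q 3)
          + dt (Q 0) (Q 3) (Q 4)) / 2) := by
        rw [← ENNReal.ofReal_add (by positivity) (by positivity),
          ← ENNReal.ofReal_add (by positivity) (by positivity)]
        congr 1
        ring
    _ ≤ ENNReal.ofReal (Real.sqrt 5 * (m / 2)) := by
        apply ENNReal.ofReal_le_ofReal
        rw [mul_div_assoc'] at *
        linarith
    _ = ENNReal.ofReal (Real.sqrt 5) * ENNReal.ofReal (m / 2) := by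
        rw [ENNReal.ofReal_mul hs0.le]
    _ ≤ ENNReal.ofReal (Real.sqrt 5) *
        ⨆ (i : Fin 5) (j : Fin 5) (k : Fin 5) (_ : i < j ∧ j < k),
          volume (convexHull ℝ ({P i, P j, P k} : Set (ℝ × ℝ))) :=
        mul_le_mul_right hsup _
end

section
/- Consider the six points Q₁ = (0,0), Q₂ = (1,0), Q₃ = (5/6, 2/3), Q₄ = (0,1), Q₅ = (−1/4, 1), Q₆ = (−2/3, 2/3) in ℝ². The area of the convex hull of {Q₁, ..., Q₆} equals 9/8, and for every triple 1 ≤ i < j < k ≤ 6 the area of the triangle with vertices Qᵢ, Qⱼ, Qₖ is at most 1/2 (with the value 1/2 attained, e.g., by Q₁, Q₂, Q₄). Hence the bound 9/4 in the hexagon area inequality is best possible. -/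
open MeasureTheory Set Pointwise



/-! ### Helpers -/

noncomputable def Lm (u v : ℝ×ℝ) : (ℝ×ℝ) →ₗ[ℝ] (ℝ×ℝ) where
  toFun p := p.1 • u + p.2 • v
  map_add' p q := by simp [add_smul]; abel
  map_smul' r p := by simp [smul_smul, smul_add]

lemma Lm_det (u v : ℝ×ℝ) : LinearMap.det (Lm u v) = u.1*v.2 - v.1*u.2 := by
  rw [← LinearMap.det_toMatrix (Module.Basis.finTwoProd ℝ), Matrix.det_fin_two]
  simp [LinearMap.toMatrix_apply, Lm]

lemma Lm_apply (u v : ℝ×ℝ) (p : ℝ×ℝ) : Lm u v p = p.1 • u + p.2 • v := rfl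

lemma line_null (a b c : ℝ) (hab : a ≠ 0 ∨ b ≠ 0) :
    volume {p : ℝ×ℝ | a*p.1+b*p.2 = c} = 0 := by
  have key : ∀ u v : ℝ×ℝ, LinearMap.det (Lm u v) ≠ 0 →
      volume (Lm u v ⁻¹' ({c} ×ˢ (univ : Set ℝ))) = 0 := by
    intro u v hdet
    rw [Measure.addHaar_preimage_linearMap volume hdet]
    rw [Measure.volume_eq_prod, Measure.prod_prod]
    simp
  rcases ne_or_eq b 0 with hb | hb
  · have := key (a,1) (b,0) (by rw [Lm_det]; simpa using hb)
    convert this using 2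
    ext p
    simp [Lm_apply, Prod.ext_iff]
    constructor <;> (intro h; linarith)
  · rcases hab with ha | ha
    · have := key (a,0) (b,1) (by rw [Lm_det]; simpa using ha)
      convert this using 2
      ext p
      simp [Lm_apply, Prod.ext_iff]
      constructor <;> (intro h; linarith)
    · exact absurd hb ha

lemma hull_inter_null {s t : Set (ℝ×ℝ)} (a b c : ℝ) (hab : a ≠ 0 ∨ b ≠ 0)
    (hs : s ⊆ {p : ℝ×ℝ | a*p.1+b*p.2 ≤ c}) (ht : t ⊆ {p : ℝ×ℝ | c ≤ a*p.1+b*p.2}) :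
    volume (s ∩ t) = 0 :=
  measure_mono_null (fun p hp => le_antisymm (hs hp.1) (ht hp.2)) (line_null a b c hab)

lemma hplane_convex (a b c : ℝ) : Convex ℝ {p : ℝ×ℝ | a*p.1+b*p.2 ≤ c} :=
  convex_halfSpace_le ⟨fun p q => by simp [Prod.fst_add, Prod.snd_add]; ring,
    fun r p => by simp [smul_eq_mul]; ring⟩ c

lemma hull_sub_hplane {s : Set (ℝ×ℝ)} (a b c : ℝ) (h : ∀ p ∈ s, a*p.1+b*p.2 ≤ c) :
    convexHull ℝ s ⊆ {p : ℝ×ℝ | a*p.1+b*p.2 ≤ c} :=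
  convexHull_min h (hplane_convex a b c)

lemma interior_sub_lt (a b c : ℝ) (hab : a ≠ 0 ∨ b ≠ 0) {K : Set (ℝ×ℝ)}
    (hK : K ⊆ {p : ℝ×ℝ | a*p.1+b*p.2 ≤ c}) :
    interior K ⊆ {p : ℝ×ℝ | a*p.1+b*p.2 < c} := by
  intro p hp
  obtain ⟨ε, hε, hball⟩ := Metric.mem_nhds_iff.mp (mem_interior_iff_mem_nhds.mp hp)
  have hpc : a*p.1+b*p.2 ≤ c := hK (interior_subset hp)
  set δ := ε/(2*(|a|+|b|+1)) with hδdef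
  have habs : 0 < |a|+|b|+1 := by positivity
  have hδ : 0 < δ := by positivity
  have hδε : δ * (|a|+|b|+1) < ε := by
    rw [hδdef, div_mul_eq_mul_div, mul_comm (2:ℝ), mul_div_assoc]
    have : (|a|+|b|+1) / ((|a|+|b|+1)*2) = 1/2 := by field_simp
    rw [this]; linarith
  have hq : (p.1 + δ*a, p.2 + δ*b) ∈ K := by
    apply hball
    simp only [Metric.mem_ball, Prod.dist_eq, Real.dist_eq, max_lt_iff]
    have h1 : |p.1 + δ*a - p.1| = δ * |a| := by
      rw [show p.1 + δ*a - p.1 = δ*a by ring, abs_mul, abs_of_pos hδ]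
    have h2 : |p.2 + δ*b - p.2| = δ * |b| := by
      rw [show p.2 + δ*b - p.2 = δ*b by ring, abs_mul, abs_of_pos hδ]
    rw [h1, h2]
    have := abs_nonneg a; have := abs_nonneg b
    constructor <;> nlinarith
  have hin := hK hq
  simp only [mem_setOf_eq] at hin ⊢
  have hab2 : 0 < a^2 + b^2 := by
    rcases hab with h | h
    · positivity
    · positivity
  nlinarith [hin, hδ, hab2]

lemma vol_sandwich {K R : Set (ℝ×ℝ)} (hconv : Convex ℝ K) (h1 : R ⊆ K)
    (h2 : interior K ⊆ R) : volume K = volume R := by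
  apply le_antisymm _ (measure_mono h1)
  have hsub : K ⊆ R ∪ frontier K := by
    intro x hx
    have hx' : x ∈ interior K ∪ frontier K := by
      have := closure_eq_interior_union_frontier K ▸ subset_closure hx
      exact this
    rcases hx' with h | h
    · exact Or.inl (h2 h)
    · exact Or.inr h
  calc volume K ≤ volume (R ∪ frontier K) := measure_mono hsub
    _ ≤ volume R + volume (frontier K) := measure_union_le _ _
    _ = volume R := by rw [hconv.addHaar_frontier volume, add_zero]

lemma int_affine (A B a b : ℝ) : ∫ x in a..b, (A + B*x) = A*(b-a) + B*(b^2-a^2)/2 := by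
  rw [intervalIntegral.integral_add intervalIntegrable_const
    ((by continuity : Continuous fun x : ℝ => B*x).intervalIntegrable _ _),
    intervalIntegral.integral_const]
  have h2 : (∫ x in a..b, B*x) = B * ∫ x in a..b, x :=
    intervalIntegral.integral_const_mul B (fun x => x)
  rw [h2, integral_id]
  simp [smul_eq_mul]; ring

/-! ### The standard triangle -/

lemma tstd_eq : convexHull ℝ ({(0,0), (1,0), (0,1)} : Set (ℝ×ℝ)) =
    {p : ℝ×ℝ | 0 ≤ p.1 ∧ 0 ≤ p.2 ∧ p.1 + p.2 ≤ 1} := by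
  apply Subset.antisymm
  · apply convexHull_min
    · intro p hp
      simp only [mem_insert_iff, mem_singleton_iff] at hp
      rcases hp with rfl | rfl | rfl <;> norm_num
    · have h1 : Convex ℝ {p : ℝ×ℝ | 0 ≤ p.1} :=
        convex_halfSpace_ge ⟨fun _ _ => rfl, fun _ _ => rfl⟩ 0
      have h2 : Convex ℝ {p : ℝ×ℝ | 0 ≤ p.2} :=
        convex_halfSpace_ge ⟨fun _ _ => rfl, fun _ _ => rfl⟩ 0
      have h3 : Convex ℝ {p : ℝ×ℝ | p.1 + p.2 ≤ 1} :=
        convex_halfSpace_le ⟨fun _ _ => by simp [Prod.fst_add, Prod.snd_add]; ring,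
          fun c x => by simp [smul_eq_mul]; ring⟩ 1
      have : {p : ℝ×ℝ | 0 ≤ p.1 ∧ 0 ≤ p.2 ∧ p.1 + p.2 ≤ 1}
          = {p : ℝ×ℝ | 0 ≤ p.1} ∩ ({p : ℝ×ℝ | 0 ≤ p.2} ∩ {p : ℝ×ℝ | p.1 + p.2 ≤ 1}) := by
        ext p; simp [and_assoc]
      rw [this]
      exact h1.inter (h2.inter h3)
  · intro p hp
    obtain ⟨h1, h2, h3⟩ := hp
    have := Finset.centerMass_mem_convexHull (t := (Finset.univ : Finset (Fin 3)))
      (w := ![1 - p.1 - p.2, p.1, p.2]) (z := ![((0:ℝ),(0:ℝ)), (1,0), (0,1)])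
      (s := ({(0,0), (1,0), (0,1)} : Set (ℝ×ℝ)))
      (by intro i _; fin_cases i <;> simp <;> linarith)
      (by simp [Fin.sum_univ_three]; linarith)
      (by intro i _; fin_cases i <;> simp)
    convert this using 1
    rw [Finset.centerMass]
    simp [Fin.sum_univ_three, Prod.ext_iff]
    rw [show 1 - p.1 - p.2 + p.1 + p.2 = (1:ℝ) by ring]
    norm_num

lemma tstd_vol : volume (convexHull ℝ ({(0,0), (1,0), (0,1)} : Set (ℝ×ℝ)))
    = ENNReal.ofReal (1/2) := by
  rw [tstd_eq]
  have hR : volume {p : ℝ×ℝ | 0 ≤ p.1 ∧ 0 ≤ p.2 ∧ p.1 + p.2 ≤ 1}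
      = volume (regionBetween (fun _ => 0) (fun x => 1 - x) (Ioo (0:ℝ) 1)) := by
    apply vol_sandwich
    · rw [← tstd_eq]; exact convex_convexHull ℝ _
    · rintro ⟨x, y⟩ ⟨hx, hy⟩
      simp only [mem_Ioo] at hx hy
      refine ⟨by linarith [hx.1], by linarith [hy.1], by linarith [hy.2]⟩
    · intro p hp
      have i1 := interior_sub_lt (-1) 0 0 (Or.inl (by norm_num))
        (K := {p : ℝ×ℝ | 0 ≤ p.1 ∧ 0 ≤ p.2 ∧ p.1 + p.2 ≤ 1})
        (fun q hq => by simp only [mem_setOf_eq] at hq ⊢; linarith [hq.1]) hp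
      have i2 := interior_sub_lt 0 (-1) 0 (Or.inr (by norm_num))
        (K := {p : ℝ×ℝ | 0 ≤ p.1 ∧ 0 ≤ p.2 ∧ p.1 + p.2 ≤ 1})
        (fun q hq => by simp only [mem_setOf_eq] at hq ⊢; linarith [hq.2.1]) hp
      have i3 := interior_sub_lt 1 1 1 (Or.inl (by norm_num))
        (K := {p : ℝ×ℝ | 0 ≤ p.1 ∧ 0 ≤ p.2 ∧ p.1 + p.2 ≤ 1})
        (fun q hq => by simp only [mem_setOf_eq] at hq ⊢; linarith [hq.2.2]) hp
      simp only [mem_setOf_eq] at i1 i2 i3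
      exact ⟨⟨by linarith, by linarith⟩,
        ⟨by show (0:ℝ) < p.2; linarith, by show p.2 < 1 - p.1; linarith⟩⟩
  rw [hR, Measure.volume_eq_prod, volume_regionBetween_eq_integral]
  · rw [show ((fun x : ℝ => 1 - x) - fun _ => 0) = fun y : ℝ => 1 - y by funext y; simp]
    rw [← integral_Ioc_eq_integral_Ioo,
      ← intervalIntegral.integral_of_le (by norm_num : (0:ℝ) ≤ 1)]
    rw [intervalIntegral.integral_sub intervalIntegrable_const
      intervalIntegral.intervalIntegrable_id, integral_id]
    norm_num
  · exact integrableOn_const measure_Ioo_lt_top.ne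
  · exact (Continuous.integrableOn_Icc (by continuity)).mono_set Ioo_subset_Icc_self
  · exact measurableSet_Ioo
  · intro x hx; simp only [mem_Ioo] at hx; linarith [hx.2]

/-! ### General triangles -/

lemma triangle_vol (a b c : ℝ×ℝ) : volume (convexHull ℝ ({a, b, c} : Set (ℝ×ℝ)))
    = ENNReal.ofReal (|(b.1-a.1)*(c.2-a.2) - (c.1-a.1)*(b.2-a.2)|/2) := by
  set L := Lm (b - a) (c - a) with hL
  have himg : convexHull ℝ ({a, b, c} : Set (ℝ×ℝ))
      = a +ᵥ (L '' (convexHull ℝ ({(0,0), (1,0), (0,1)} : Set (ℝ×ℝ)))) := by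
    rw [L.image_convexHull, ← convexHull_vadd]
    congr 1
    rw [Set.image_insert_eq, Set.image_insert_eq, Set.image_singleton]
    have e0 : L (0, 0) = 0 := by simp [hL, Lm_apply]
    have e1 : L (1, 0) = b - a := by simp [hL, Lm_apply]
    have e2 : L (0, 1) = c - a := by simp [hL, Lm_apply]
    rw [e0, e1, e2]
    rw [Set.vadd_set_insert, Set.vadd_set_insert, Set.vadd_set_singleton]
    simp [vadd_eq_add]
  rw [himg, measure_vadd, Measure.addHaar_image_linearMap, tstd_vol, hL, Lm_det]
  rw [← ENNReal.ofReal_mul (abs_nonneg _)]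
  congr 1
  simp only [Prod.fst_sub, Prod.snd_sub]
  ring

lemma tri_le (a b c : ℝ×ℝ)
    (h : (b.1-a.1)*(c.2-a.2) - (c.1-a.1)*(b.2-a.2) ≤ 1)
    (h' : -1 ≤ (b.1-a.1)*(c.2-a.2) - (c.1-a.1)*(b.2-a.2)) :
    volume (convexHull ℝ ({a, b, c} : Set (ℝ×ℝ))) ≤ ENNReal.ofReal (1/2) := by
  rw [triangle_vol]
  apply ENNReal.ofReal_le_ofReal
  have := abs_le.mpr ⟨h', h⟩
  linarith


def hexS : Set (ℝ×ℝ) :=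
  {p : ℝ×ℝ | 0*p.1 + -1*p.2 ≤ 0} ∩ ({p : ℝ×ℝ | -1*p.1 + -1*p.2 ≤ 0} ∩
  ({p : ℝ×ℝ | -4/5*p.1 + 1*p.2 ≤ 6/5} ∩ ({p : ℝ×ℝ | 0*p.1 + 1*p.2 ≤ 1} ∩
  ({p : ℝ×ℝ | 2/5*p.1 + 1*p.2 ≤ 1} ∩ {p : ℝ×ℝ | 4*p.1 + 1*p.2 ≤ 4}))))

lemma hexS_convex : Convex ℝ hexS :=
  (hplane_convex _ _ _).inter ((hplane_convex _ _ _).inter ((hplane_convex _ _ _).inter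
    ((hplane_convex _ _ _).inter ((hplane_convex _ _ _).inter (hplane_convex _ _ _)))))

lemma mem_hexS {p : ℝ×ℝ} : p ∈ hexS ↔
    0 ≤ p.2 ∧ -p.1 ≤ p.2 ∧ p.2 ≤ 4/5*p.1 + 6/5 ∧ p.2 ≤ 1 ∧ p.2 ≤ 1 - 2/5*p.1 ∧
      p.2 ≤ 4 - 4*p.1 := by
  simp only [hexS, mem_inter_iff, mem_setOf_eq]
  constructor <;> (rintro ⟨h1,h2,h3,h4,h5,h6⟩; refine ⟨by linarith, by linarith, by linarith,
    by linarith, by linarith, by linarith⟩)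

noncomputable def fH : ℝ → ℝ := fun x => max 0 (-x)
noncomputable def gH : ℝ → ℝ := fun x => min (min (4/5*x+6/5) (1-2/5*x)) (min 1 (4-4*x))

lemma fH_cont : Continuous fH := continuous_const.max continuous_neg
lemma gH_cont : Continuous gH := by unfold gH; fun_prop

def hexR : Set (ℝ×ℝ) := regionBetween fH gH (Ioo (-2/3 : ℝ) 1)

lemma hexR_sub : hexR ⊆ hexS := by
  rintro ⟨x, y⟩ ⟨hx, hy⟩
  simp only [mem_Ioo, fH, gH, max_lt_iff, lt_min_iff] at hx hy
  obtain ⟨⟨h1, h2⟩, ⟨h3, h4⟩, h5, h6⟩ := hy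
  rw [mem_hexS]
  refine ⟨by linarith, by linarith, by linarith, by linarith, by linarith, by linarith⟩

lemma interior_hexS_sub : interior hexS ⊆ hexR := by
  intro p hp
  have i1 := interior_sub_lt 0 (-1) 0 (Or.inr (by norm_num)) (fun q hq => hq.1) hp
  have i2 := interior_sub_lt (-1) (-1) 0 (Or.inl (by norm_num)) (fun q hq => hq.2.1) hp
  have i3 := interior_sub_lt (-4/5) 1 (6/5) (Or.inr (by norm_num))
    (fun q hq => hq.2.2.1) hp
  have i4 := interior_sub_lt 0 1 1 (Or.inr (by norm_num)) (fun q hq => hq.2.2.2.1) hp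
  have i5 := interior_sub_lt (2/5) 1 1 (Or.inr (by norm_num)) (fun q hq => hq.2.2.2.2.1) hp
  have i6 := interior_sub_lt 4 1 4 (Or.inl (by norm_num)) (fun q hq => hq.2.2.2.2.2) hp
  simp only [mem_setOf_eq] at i1 i2 i3 i4 i5 i6
  constructor
  · simp only [mem_Ioo]
    constructor <;> linarith
  · constructor
    · exact max_lt (by linarith) (by linarith)
    · exact lt_min (lt_min (by linarith) (by linarith)) (lt_min (by linarith) (by linarith))

lemma hexS_vol : volume hexS = ENNReal.ofReal (9/8) := by
  rw [vol_sandwich hexS_convex hexR_sub interior_hexS_sub]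
  rw [hexR, Measure.volume_eq_prod, volume_regionBetween_eq_integral]
  · congr 1
    rw [← integral_Ioc_eq_integral_Ioo,
      ← intervalIntegral.integral_of_le (by norm_num : (-2/3:ℝ) ≤ 1)]
    have hc : Continuous (gH - fH) := gH_cont.sub fH_cont
    rw [← intervalIntegral.integral_add_adjacent_intervals (a := -2/3) (b := -1/4) (c := 1)
      (hc.intervalIntegrable _ _) (hc.intervalIntegrable _ _),
      ← intervalIntegral.integral_add_adjacent_intervals (a := -1/4) (b := 0) (c := 1)
      (hc.intervalIntegrable _ _) (hc.intervalIntegrable _ _),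
      ← intervalIntegral.integral_add_adjacent_intervals (a := 0) (b := 5/6) (c := 1)
      (hc.intervalIntegrable _ _) (hc.intervalIntegrable _ _)]
    have p1 : ∫ x in (-2/3 : ℝ)..(-1/4), (gH - fH) x = ∫ x in (-2/3 : ℝ)..(-1/4), (6/5 + 9/5*x) := by
      apply intervalIntegral.integral_congr
      intro x hx
      rw [uIcc_of_le (by norm_num)] at hx
      obtain ⟨ha, hb⟩ := hx
      simp only [Pi.sub_apply, fH, gH]
      rw [max_eq_right (by linarith),
        show min (4/5*x+6/5) (1-2/5*x) = 4/5*x+6/5 from min_eq_left (by linarith),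
        min_eq_left (le_min (by linarith) (by linarith))]
      ring
    have p2 : ∫ x in (-1/4 : ℝ)..0, (gH - fH) x = ∫ x in (-1/4 : ℝ)..0, (1 + 1*x) := by
      apply intervalIntegral.integral_congr
      intro x hx
      rw [uIcc_of_le (by norm_num)] at hx
      obtain ⟨ha, hb⟩ := hx
      simp only [Pi.sub_apply, fH, gH]
      rw [max_eq_right (by linarith), show min (1:ℝ) (4-4*x) = 1 from min_eq_left (by linarith),
        min_eq_right (le_min (by linarith) (by linarith))]
      ring
    have p3 : ∫ x in (0 : ℝ)..(5/6), (gH - fH) x = ∫ x in (0 : ℝ)..(5/6), (1 + -2/5*x) := by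
      apply intervalIntegral.integral_congr
      intro x hx
      rw [uIcc_of_le (by norm_num)] at hx
      obtain ⟨ha, hb⟩ := hx
      simp only [Pi.sub_apply, fH, gH]
      rw [max_eq_left (by linarith),
        show min (4/5*x+6/5) (1-2/5*x) = 1-2/5*x from min_eq_right (by linarith),
        min_eq_left (le_min (by linarith) (by linarith))]
      ring
    have p4 : ∫ x in (5/6 : ℝ)..1, (gH - fH) x = ∫ x in (5/6 : ℝ)..1, (4 + -4*x) := by
      apply intervalIntegral.integral_congr
      intro x hx
      rw [uIcc_of_le (by norm_num)] at hx
      obtain ⟨ha, hb⟩ := hx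
      simp only [Pi.sub_apply, fH, gH]
      rw [max_eq_left (by linarith),
        show min (4/5*x+6/5) (1-2/5*x) = 1-2/5*x from min_eq_right (by linarith),
        show min (1:ℝ) (4-4*x) = 4-4*x from min_eq_right (by linarith),
        min_eq_right (by linarith)]
      ring
    rw [p1, p2, p3, p4, int_affine, int_affine, int_affine, int_affine]
    norm_num
  · exact (fH_cont.integrableOn_Icc).mono_set Ioo_subset_Icc_self
  · exact (gH_cont.integrableOn_Icc).mono_set Ioo_subset_Icc_self
  · exact measurableSet_Ioo
  · intro x hx
    simp only [mem_Ioo] at hx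
    refine max_le (le_min (le_min (by linarith) (by linarith)) (le_min (by linarith) (by linarith)))
      (le_min (le_min (by linarith) (by linarith)) (le_min (by linarith) (by linarith)))


lemma tri_nullMeasurable (a b c : ℝ×ℝ) :
    NullMeasurableSet (convexHull ℝ ({a, b, c} : Set (ℝ×ℝ))) volume := by
  have : IsCompact (convexHull ℝ ({a, b, c} : Set (ℝ×ℝ))) :=
    (((finite_singleton c).insert b).insert a).isCompact_convexHull ℝ
  exact this.isClosed.measurableSet.nullMeasurableSet

/-- Sharpness of the bound `9/4` for hexagons: for the hexagon with vertices
`(0,0), (1,0), (5/6,2/3), (0,1), (-1/4,1), (-2/3,2/3)`, the area is `9/8`,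
every vertex triangle has area at most `1/2`, and the triangle `Q₁Q₂Q₄`
has area exactly `1/2`. -/
theorem hexagon_bound_sharp :
    let Q : Fin 6 → ℝ × ℝ :=
      ![(0, 0), (1, 0), (5/6, 2/3), (0, 1), (-1/4, 1), (-2/3, 2/3)]
    volume (convexHull ℝ (Set.range Q)) = ENNReal.ofReal (9/8) ∧
    (∀ i j k : Fin 6, i < j → j < k →
      volume (convexHull ℝ ({Q i, Q j, Q k} : Set (ℝ × ℝ))) ≤ ENNReal.ofReal (1/2)) ∧
    volume (convexHull ℝ ({Q 0, Q 1, Q 3} : Set (ℝ × ℝ))) = ENNReal.ofReal (1/2) := by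
  intro Q
  refine ⟨?_, ?_, ?_⟩
  · -- area of the hexagon
    set H := convexHull ℝ (Set.range Q) with hH
    set T1 := convexHull ℝ ({(0,0), (1,0), (5/6,2/3)} : Set (ℝ×ℝ)) with hT1
    set T2 := convexHull ℝ ({(0,0), (5/6,2/3), (0,1)} : Set (ℝ×ℝ)) with hT2
    set T3 := convexHull ℝ ({(0,0), (0,1), (-1/4,1)} : Set (ℝ×ℝ)) with hT3
    set T4 := convexHull ℝ ({(0,0), (-1/4,1), (-2/3,2/3)} : Set (ℝ×ℝ)) with hT4
    have memQ : ∀ m : Fin 6, Q m ∈ Set.range Q := fun m => ⟨m, rfl⟩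
    have hsub : ∀ s : Set (ℝ×ℝ), s ⊆ Set.range Q → convexHull ℝ s ⊆ H :=
      fun s hs => convexHull_mono hs
    have hT1H : T1 ⊆ H := by
      apply hsub
      rintro p (rfl | rfl | rfl)
      · exact ⟨0, rfl⟩
      · exact ⟨1, rfl⟩
      · exact ⟨2, rfl⟩
    have hT2H : T2 ⊆ H := by
      apply hsub
      rintro p (rfl | rfl | rfl)
      · exact ⟨0, rfl⟩
      · exact ⟨2, rfl⟩
      · exact ⟨3, rfl⟩
    have hT3H : T3 ⊆ H := by
      apply hsub
      rintro p (rfl | rfl | rfl)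
      · exact ⟨0, rfl⟩
      · exact ⟨3, rfl⟩
      · exact ⟨4, rfl⟩
    have hT4H : T4 ⊆ H := by
      apply hsub
      rintro p (rfl | rfl | rfl)
      · exact ⟨0, rfl⟩
      · exact ⟨4, rfl⟩
      · exact ⟨5, rfl⟩
    -- disjointness (up to null sets)
    have d12 : volume (T1 ∩ T2) = 0 := by
      apply hull_inter_null (-4) 5 0 (Or.inl (by norm_num))
      · exact hull_sub_hplane _ _ _ (by rintro p (rfl | rfl | rfl) <;> norm_num)
      · rw [hT2]
        intro p hp
        have := hull_sub_hplane 4 (-5) 0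
          (s := ({(0,0), (5/6,2/3), (0,1)} : Set (ℝ×ℝ)))
          (by rintro p (rfl | rfl | rfl) <;> norm_num) hp
        simp only [mem_setOf_eq] at this ⊢
        linarith
    have d34 : volume (T3 ∩ T4) = 0 := by
      apply hull_inter_null (-4) (-1) 0 (Or.inl (by norm_num))
      · exact hull_sub_hplane _ _ _ (by rintro p (rfl | rfl | rfl) <;> norm_num)
      · rw [hT4]
        intro p hp
        have := hull_sub_hplane 4 1 0
          (s := ({(0,0), (-1/4,1), (-2/3,2/3)} : Set (ℝ×ℝ)))
          (by rintro p (rfl | rfl | rfl) <;> norm_num) hp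
        simp only [mem_setOf_eq] at this ⊢
        linarith
    have dcross : volume ((T1 ∪ T2) ∩ (T3 ∪ T4)) = 0 := by
      apply hull_inter_null (-1) 0 0 (Or.inl (by norm_num))
      · apply union_subset <;>
          exact hull_sub_hplane _ _ _ (by rintro p (rfl | rfl | rfl) <;> norm_num)
      · apply union_subset
        · rw [hT3]
          intro p hp
          have := hull_sub_hplane 1 0 0 (s := ({(0,0), (0,1), (-1/4,1)} : Set (ℝ×ℝ)))
            (by rintro p (rfl | rfl | rfl) <;> norm_num) hp
          simp only [mem_setOf_eq] at this ⊢
          linarith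
        · rw [hT4]
          intro p hp
          have := hull_sub_hplane 1 0 0 (s := ({(0,0), (-1/4,1), (-2/3,2/3)} : Set (ℝ×ℝ)))
            (by rintro p (rfl | rfl | rfl) <;> norm_num) hp
          simp only [mem_setOf_eq] at this ⊢
          linarith
    have hunion : volume (T1 ∪ T2 ∪ (T3 ∪ T4)) = ENNReal.ofReal (9/8) := by
      simp only [hT1, hT2, hT3, hT4] at d12 d34 dcross ⊢
      rw [measure_union₀ ((tri_nullMeasurable _ _ _).union (tri_nullMeasurable _ _ _)) dcross,
        measure_union₀ (tri_nullMeasurable _ _ _) d12,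
        measure_union₀ (tri_nullMeasurable _ _ _) d34,
        triangle_vol, triangle_vol, triangle_vol, triangle_vol]
      rw [show |((1:ℝ)-0)*(2/3-0) - (5/6-0)*(0-0)|/2 = 1/3 by rw [abs_of_nonneg] <;> norm_num,
        show |((5:ℝ)/6-0)*(1-0) - (0-0)*(2/3-0)|/2 = 5/12 by rw [abs_of_nonneg] <;> norm_num,
        show |((0:ℝ)-0)*(1-0) - (-1/4-0)*(1-0)|/2 = 1/8 by rw [abs_of_nonneg] <;> norm_num,
        show |((-1:ℝ)/4-0)*(2/3-0) - (-2/3-0)*(1-0)|/2 = 1/4 by rw [abs_of_nonneg] <;> norm_num]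
      rw [← ENNReal.ofReal_add (by norm_num) (by norm_num),
        ← ENNReal.ofReal_add (by norm_num) (by norm_num),
        ← ENNReal.ofReal_add (by norm_num) (by norm_num)]
      norm_num
    apply le_antisymm
    · -- upper bound via hexS
      have hHS : H ⊆ hexS := by
        apply convexHull_min _ hexS_convex
        rw [Set.range_subset_iff]
        intro i
        rw [mem_hexS]
        fin_cases i <;> norm_num [Q]
      calc volume H ≤ volume hexS := measure_mono hHS
        _ = ENNReal.ofReal (9/8) := hexS_vol
    · calc ENNReal.ofReal (9/8) = volume (T1 ∪ T2 ∪ (T3 ∪ T4)) := hunion.symm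
        _ ≤ volume H := measure_mono (union_subset (union_subset hT1H hT2H)
            (union_subset hT3H hT4H))
  · -- all triangles have area at most 1/2
    intro i j k hij hjk
    fin_cases i <;> fin_cases j <;> fin_cases k <;>
      first
        | exact absurd hij (by decide)
        | exact absurd hjk (by decide)
        | (simp only [Q, Matrix.cons_val_zero, Matrix.cons_val_one, Matrix.head_cons,
            Matrix.cons_val_succ]
           exact tri_le _ _ _ (by norm_num) (by norm_num))
  · -- the triangle Q₁Q₂Q₄
    show volume (convexHull ℝ ({((0:ℝ),(0:ℝ)), (1,0), (0,1)} : Set (ℝ×ℝ)))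
      = ENNReal.ofReal (1/2)
    rw [triangle_vol]
    norm_num
end

section
/- Consider the five points Q₁ = (0,0), Q₂ = (1,0), Q₃ = (1, (√5−1)/2), Q₄ = (0,1), Q₅ = ((1−√5)/2, (√5−1)/2) in ℝ². The area of the convex hull of {Q₁, ..., Q₅} equals √5/2, and for every triple 1 ≤ i < j < k ≤ 5 the area of the triangle with vertices Qᵢ, Qⱼ, Qₖ is at most 1/2 (with the value 1/2 attained, e.g., by Q₁, Q₂, Q₄). Hence the bound √5 in the pentagon area inequality is best possible. -/
open MeasureTheory Set Pointwise

private lemma hlin (a b : ℝ) : IsLinearMap ℝ (fun p : ℝ × ℝ => a * p.1 + b * p.2) := by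
  constructor
  · intro x y; simp only [Prod.fst_add, Prod.snd_add]; ring
  · intro c x; simp only [Prod.smul_fst, Prod.smul_snd, smul_eq_mul]; ring

private lemma combo_mem (a b c : ℝ × ℝ) (α β γ : ℝ) (hα : 0 ≤ α) (hβ : 0 ≤ β) (hγ : 0 ≤ γ)
    (hsum : α + β + γ = 1) :
    α • a + β • b + γ • c ∈ convexHull ℝ ({a, b, c} : Set (ℝ × ℝ)) := by
  have hconv : Convex ℝ (convexHull ℝ ({a, b, c} : Set (ℝ × ℝ))) := convex_convexHull ℝ _
  have ha' : a ∈ convexHull ℝ ({a, b, c} : Set (ℝ × ℝ)) := subset_convexHull ℝ _ (by simp)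
  have hb' : b ∈ convexHull ℝ ({a, b, c} : Set (ℝ × ℝ)) := subset_convexHull ℝ _ (by simp)
  have hc' : c ∈ convexHull ℝ ({a, b, c} : Set (ℝ × ℝ)) := subset_convexHull ℝ _ (by simp)
  rcases eq_or_lt_of_le (add_nonneg hα hβ) with h | h
  · have hα0 : α = 0 := by linarith
    have hβ0 : β = 0 := by linarith
    have hγ1 : γ = 1 := by linarith
    simp [hα0, hβ0, hγ1, hc']
  · have hs : α + β ≠ 0 := ne_of_gt h
    have hq : (α / (α + β)) • a + (β / (α + β)) • b ∈ convexHull ℝ ({a, b, c} : Set (ℝ × ℝ)) :=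
      hconv ha' hb' (div_nonneg hα h.le) (div_nonneg hβ h.le) (by field_simp)
    have he : α • a + β • b + γ • c = (α + β) • ((α / (α + β)) • a + (β / (α + β)) • b) + γ • c := by
      rw [smul_add, smul_smul, smul_smul, show (α + β) * (α / (α + β)) = α by field_simp,
        show (α + β) * (β / (α + β)) = β by field_simp]
    rw [he]
    exact hconv hq hc' h.le hγ (by linarith)

private lemma hull_stdT :
    convexHull ℝ ({((0 : ℝ), (0 : ℝ)), (1, 0), (0, 1)} : Set (ℝ × ℝ)) =
      {p : ℝ × ℝ | 0 ≤ p.1 ∧ 0 ≤ p.2 ∧ p.1 + p.2 ≤ 1} := by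
  apply Subset.antisymm
  · refine convexHull_min ?_ ?_
    · rintro p (rfl | rfl | rfl) <;> norm_num
    · intro p hp q hq u v hu hv huv
      obtain ⟨h1, h2, h3⟩ := hp
      obtain ⟨h4, h5, h6⟩ := hq
      refine ⟨?_, ?_, ?_⟩ <;>
        simp only [Prod.fst_add, Prod.snd_add, Prod.smul_fst, Prod.smul_snd, smul_eq_mul,
          mem_setOf_eq] <;> nlinarith
  · rintro ⟨x, y⟩ ⟨h1, h2, h3⟩
    have hmem := combo_mem ((0 : ℝ), (0 : ℝ)) (1, 0) (0, 1) (1 - x - y) x y (by linarith) h1 h2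
      (by ring)
    have he : (1 - x - y) • ((0 : ℝ), (0 : ℝ)) + x • ((1 : ℝ), (0 : ℝ)) + y • ((0 : ℝ), (1 : ℝ))
        = ((x, y) : ℝ × ℝ) := by
      rw [Prod.ext_iff]; constructor <;> simp
    rwa [he] at hmem

private lemma null_line (m : ℝ) : volume {p : ℝ × ℝ | p.2 = m * p.1} = 0 := by
  have hsub : {p : ℝ × ℝ | p.2 = m * p.1} ⊆
      (Submodule.span ℝ {((1 : ℝ), m)} : Submodule ℝ (ℝ × ℝ)) := by
    rintro ⟨x, y⟩ h
    simp only [mem_setOf_eq] at h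
    refine Submodule.mem_span_singleton.2 ⟨x, ?_⟩
    rw [Prod.smul_mk, Prod.mk.injEq]
    constructor <;> simp [h, mul_comm]
  refine measure_mono_null hsub (Measure.addHaar_submodule _ _ ?_)
  intro htop
  have hmem : ((0 : ℝ), (1 : ℝ)) ∈ Submodule.span ℝ {((1 : ℝ), m)} := htop ▸ Submodule.mem_top
  obtain ⟨c, hc⟩ := Submodule.mem_span_singleton.1 hmem
  rw [Prod.smul_mk, Prod.mk.injEq] at hc
  obtain ⟨hc1, hc2⟩ := hc
  simp only [smul_eq_mul, mul_one] at hc1 hc2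
  rw [hc1] at hc2
  simp at hc2

private lemma null_vert : volume {p : ℝ × ℝ | p.1 = 0} = 0 := by
  have hsub : {p : ℝ × ℝ | p.1 = 0} ⊆
      (Submodule.span ℝ {((0 : ℝ), (1 : ℝ))} : Submodule ℝ (ℝ × ℝ)) := by
    rintro ⟨x, y⟩ h
    simp only [mem_setOf_eq] at h
    refine Submodule.mem_span_singleton.2 ⟨y, ?_⟩
    rw [Prod.smul_mk, Prod.mk.injEq]
    constructor <;> simp [h]
  refine measure_mono_null hsub (Measure.addHaar_submodule _ _ ?_)
  intro htop
  have hmem : ((1 : ℝ), (0 : ℝ)) ∈ Submodule.span ℝ {((0 : ℝ), (1 : ℝ))} := htop ▸ Submodule.mem_top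
  obtain ⟨c, hc⟩ := Submodule.mem_span_singleton.1 hmem
  rw [Prod.smul_mk, Prod.mk.injEq] at hc
  obtain ⟨hc1, hc2⟩ := hc
  simp at hc1

private lemma null_affline : volume {p : ℝ × ℝ | p.1 + p.2 = 1} = 0 := by
  have him : {p : ℝ × ℝ | p.1 + p.2 = 1} =
      (fun q : ℝ × ℝ => ((1 : ℝ), (0 : ℝ)) + q) '' {p : ℝ × ℝ | p.2 = (-1) * p.1} := by
    ext ⟨x, y⟩
    simp only [mem_image, mem_setOf_eq, Prod.ext_iff, Prod.fst_add, Prod.snd_add]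
    constructor
    · intro h
      exact ⟨(x - 1, y), by simp; linarith, by simp⟩
    · rintro ⟨⟨u, v⟩, hv, h1, h2⟩
      simp only at hv h1 h2
      subst h1; subst h2; linarith
  rw [him, Set.image_add_left, measure_preimage_add]
  exact null_line (-1)

private lemma stdT_vol :
    volume ({p : ℝ × ℝ | 0 ≤ p.1 ∧ 0 ≤ p.2 ∧ p.1 + p.2 ≤ 1} : Set (ℝ × ℝ)) =
      ENNReal.ofReal (1 / 2) := by
  set A : Set (ℝ × ℝ) := {p : ℝ × ℝ | 0 ≤ p.1 ∧ 0 ≤ p.2 ∧ p.1 + p.2 ≤ 1} with hA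
  set B : Set (ℝ × ℝ) := {p : ℝ × ℝ | p.1 ≤ 1 ∧ p.2 ≤ 1 ∧ 1 ≤ p.1 + p.2} with hB
  have hAm : MeasurableSet A := by
    rw [hA, ← hull_stdT]
    exact ((Set.toFinite _).isCompact_convexHull ℝ).isClosed.measurableSet
  have hBimg : B = (fun q : ℝ × ℝ => ((1 : ℝ), (1 : ℝ)) + q) '' (-A) := by
    ext ⟨x, y⟩
    simp only [hB, hA, mem_image, mem_neg, mem_setOf_eq, Prod.ext_iff, Prod.fst_add, Prod.snd_add]
    constructor
    · intro ⟨h1, h2, h3⟩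
      refine ⟨(x - 1, y - 1), ?_, by simp, by simp⟩
      simp only [Prod.fst_neg, Prod.snd_neg]
      refine ⟨by simp; linarith, by simp; linarith, by simp; linarith⟩
    · rintro ⟨⟨u, v⟩, ⟨h1, h2, h3⟩, h4, h5⟩
      simp only [Prod.fst_neg, Prod.snd_neg] at h1 h2 h3
      subst h4; subst h5
      refine ⟨by linarith, by linarith, by linarith⟩
  have hBvol : volume B = volume A := by
    rw [hBimg, Set.image_add_left, measure_preimage_add, Measure.measure_neg]
  have hUnion : A ∪ B = Icc (0 : ℝ) 1 ×ˢ Icc (0 : ℝ) 1 := by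
    ext ⟨x, y⟩
    simp only [hA, hB, mem_union, mem_setOf_eq, mem_prod, mem_Icc]
    constructor
    · rintro (⟨h1, h2, h3⟩ | ⟨h1, h2, h3⟩) <;>
        exact ⟨⟨by linarith, by linarith⟩, by linarith, by linarith⟩
    · rintro ⟨⟨h1, h2⟩, h3, h4⟩
      rcases le_total (x + y) 1 with h | h
      · exact Or.inl ⟨h1, h3, h⟩
      · exact Or.inr ⟨h2, h4, h⟩
  have hInter : volume (A ∩ B) = 0 := by
    refine measure_mono_null ?_ null_affline
    rintro ⟨x, y⟩ ⟨⟨_, _, h3⟩, _, _, h6⟩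
    simp only [mem_setOf_eq]
    exact le_antisymm h3 h6
  have hsq : volume (A ∪ B) = 1 := by
    rw [hUnion, Measure.volume_eq_prod, Measure.prod_prod, Real.volume_Icc]
    norm_num
  have hBm : MeasurableSet B := by
    rw [hBimg, Set.image_add_left]
    exact (hAm.neg).preimage (measurable_const_add _)
  have hsum : volume A + volume B = 1 := by
    have h := measure_union_add_inter (μ := volume) A hBm
    rw [hInter, hsq, add_zero] at h
    exact h.symm
  rw [hBvol, ← two_mul] at hsum
  have hhalf : volume A = 1 / 2 := by
    rw [ENNReal.eq_div_iff (by norm_num) (by norm_num)]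
    exact hsum
  rw [hhalf, ENNReal.ofReal_div_of_pos (by norm_num), ENNReal.ofReal_one,
    ENNReal.ofReal_ofNat]

private lemma tri_vol (a b c : ℝ × ℝ) :
    volume (convexHull ℝ ({a, b, c} : Set (ℝ × ℝ))) =
      ENNReal.ofReal (|(b.1 - a.1) * (c.2 - a.2) - (c.1 - a.1) * (b.2 - a.2)| / 2) := by
  set f := Matrix.toLin (Module.Basis.finTwoProd ℝ) (Module.Basis.finTwoProd ℝ)
    !![b.1 - a.1, c.1 - a.1; b.2 - a.2, c.2 - a.2] with hf
  have hdet : LinearMap.det f = (b.1 - a.1) * (c.2 - a.2) - (c.1 - a.1) * (b.2 - a.2) := by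
    rw [hf, LinearMap.det_toLin, Matrix.det_fin_two_of]
  have happ : ∀ p : ℝ × ℝ, f p =
      ((b.1 - a.1) * p.1 + (c.1 - a.1) * p.2, (b.2 - a.2) * p.1 + (c.2 - a.2) * p.2) := fun p =>
    Matrix.toLin_finTwoProd_apply _ _ _ _ p
  have hset : ({a, b, c} : Set (ℝ × ℝ)) =
      (fun q : ℝ × ℝ => a + q) '' (f '' {((0 : ℝ), (0 : ℝ)), (1, 0), (0, 1)}) := by
    simp only [Set.image_insert_eq, Set.image_singleton]
    have e0 : a + f ((0 : ℝ), (0 : ℝ)) = a := by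
      rw [happ]; rw [Prod.ext_iff]; constructor <;> simp
    have e1 : a + f ((1 : ℝ), (0 : ℝ)) = b := by
      rw [happ]; rw [Prod.ext_iff]
      constructor <;> (simp only [Prod.fst_add, Prod.snd_add]; norm_num)
    have e2 : a + f ((0 : ℝ), (1 : ℝ)) = c := by
      rw [happ]; rw [Prod.ext_iff]
      constructor <;> (simp only [Prod.fst_add, Prod.snd_add]; norm_num)
    rw [e0, e1, e2]
  have haff : ∀ s : Set (ℝ × ℝ), convexHull ℝ ((fun q : ℝ × ℝ => a + q) '' s) =
      (fun q : ℝ × ℝ => a + q) '' convexHull ℝ s := by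
    intro s
    have h1 : (fun q : ℝ × ℝ => a + q) '' s = a +ᵥ s := by
      simp [← Set.image_vadd, vadd_eq_add]
    have h2 : (fun q : ℝ × ℝ => a + q) '' convexHull ℝ s = a +ᵥ convexHull ℝ s := by
      simp [← Set.image_vadd, vadd_eq_add]
    rw [h1, h2, convexHull_vadd]
  have hhull : convexHull ℝ ({a, b, c} : Set (ℝ × ℝ)) =
      (fun q : ℝ × ℝ => a + q) ''
        (f '' convexHull ℝ ({((0 : ℝ), (0 : ℝ)), (1, 0), (0, 1)} : Set (ℝ × ℝ))) := by
    rw [hset, haff, ← f.image_convexHull]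
  rw [hhull, Set.image_add_left, measure_preimage_add, Measure.addHaar_image_linearMap,
    hull_stdT, stdT_vol, hdet, ← ENNReal.ofReal_mul (abs_nonneg _)]
  congr 1
  ring

set_option maxHeartbeats 2000000 in
/-- Sharpness of the bound `√5` for pentagons: for the pentagon with vertices
`(0,0), (1,0), (1,(√5-1)/2), (0,1), ((1-√5)/2,(√5-1)/2)`, the area is `√5/2`,
every vertex triangle has area at most `1/2`, and the triangle `Q₁Q₂Q₄`
has area exactly `1/2`. -/
theorem pentagon_bound_sharp :
    let Q : Fin 5 → ℝ × ℝ :=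
      ![(0, 0), (1, 0), (1, (Real.sqrt 5 - 1) / 2), (0, 1),
        ((1 - Real.sqrt 5) / 2, (Real.sqrt 5 - 1) / 2)]
    volume (convexHull ℝ (Set.range Q)) = ENNReal.ofReal (Real.sqrt 5 / 2) ∧
    (∀ i j k : Fin 5, i < j → j < k →
      volume (convexHull ℝ ({Q i, Q j, Q k} : Set (ℝ × ℝ))) ≤ ENNReal.ofReal (1/2)) ∧
    volume (convexHull ℝ ({Q 0, Q 1, Q 3} : Set (ℝ × ℝ))) = ENNReal.ofReal (1/2) := by
  intro Q
  have hQ : Q = ![(0, 0), (1, 0), (1, (Real.sqrt 5 - 1) / 2), (0, 1),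
      ((1 - Real.sqrt 5) / 2, (Real.sqrt 5 - 1) / 2)] := rfl
  have h5 : Real.sqrt 5 ^ 2 = 5 := Real.sq_sqrt (by norm_num)
  have h5' : (0 : ℝ) ≤ Real.sqrt 5 := Real.sqrt_nonneg 5
  set t : ℝ := (Real.sqrt 5 - 1) / 2 with hts
  have ht0 : 0 < t := by rw [hts]; nlinarith
  have ht1 : t < 1 := by rw [hts]; nlinarith
  have htt : t * t = 1 - t := by rw [hts]; nlinarith
  refine ⟨?_, ?_, ?_⟩
  · -- pentagon area
    have hrange : Set.range Q =
        ({((0 : ℝ), (0 : ℝ)), (1, 0), (1, t), (0, 1), (-t, t)} : Set (ℝ × ℝ)) := by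
      rw [hQ, show ((1 - Real.sqrt 5) / 2, (Real.sqrt 5 - 1) / 2) = ((-t, t) : ℝ × ℝ) by
        rw [hts, Prod.mk.injEq]; constructor <;> ring]
      ext p
      simp [Matrix.range_cons, Matrix.range_empty]
      tauto
    set T1 := convexHull ℝ ({((0 : ℝ), (0 : ℝ)), (1, 0), (1, t)} : Set (ℝ × ℝ)) with hT1
    set T2 := convexHull ℝ ({((0 : ℝ), (0 : ℝ)), (1, t), (0, 1)} : Set (ℝ × ℝ)) with hT2
    set T3 := convexHull ℝ ({((0 : ℝ), (0 : ℝ)), (0, 1), (-t, t)} : Set (ℝ × ℝ)) with hT3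
    have hhullS : convexHull ℝ (Set.range Q) ⊆
        ({p : ℝ × ℝ | 0 ≤ 0 * p.1 + 1 * p.2} ∩ {p | 1 * p.1 + 0 * p.2 ≤ 1} ∩
          {p | (1 - t) * p.1 + 1 * p.2 ≤ 1} ∩ {p | (-(1 - t)) * p.1 + t * p.2 ≤ t} ∩
          {p | 0 ≤ 1 * p.1 + 1 * p.2}) := by
      refine convexHull_min ?_
        (((((convex_halfSpace_ge (hlin 0 1) 0).inter (convex_halfSpace_le (hlin 1 0) 1)).inter
          (convex_halfSpace_le (hlin (1 - t) 1) 1)).inter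
            (convex_halfSpace_le (hlin (-(1 - t)) t) t)).inter (convex_halfSpace_ge (hlin 1 1) 0))
      rw [hrange]
      rintro p (rfl | rfl | rfl | rfl | rfl) <;>
        refine ⟨⟨⟨⟨?_, ?_⟩, ?_⟩, ?_⟩, ?_⟩ <;>
          (simp only [mem_setOf_eq]; norm_num; try nlinarith [htt, ht0, ht1])
    have hcover : ({p : ℝ × ℝ | 0 ≤ 0 * p.1 + 1 * p.2} ∩ {p | 1 * p.1 + 0 * p.2 ≤ 1} ∩
          {p | (1 - t) * p.1 + 1 * p.2 ≤ 1} ∩ {p | (-(1 - t)) * p.1 + t * p.2 ≤ t} ∩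
          {p | 0 ≤ 1 * p.1 + 1 * p.2}) ⊆ T1 ∪ T2 ∪ T3 := by
      rintro ⟨x, y⟩ ⟨⟨⟨⟨h1, h2⟩, h3⟩, h4⟩, h5⟩
      simp only [mem_setOf_eq] at h1 h2 h3 h4 h5
      norm_num at h1 h2 h3 h4 h5
      rcases le_total x 0 with hx | hx
      · refine Or.inr ?_
        have ha2 : 0 ≤ -x / t := div_nonneg (by linarith) ht0.le
        have ha1 : 0 ≤ x + y := by linarith
        have ha0 : 0 ≤ 1 - (x + y) - -x / t := by
          have hnum : 0 ≤ t - t * (x + y) + x := by nlinarith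
          have heq : 1 - (x + y) - -x / t = (t - t * (x + y) + x) / t := by
            field_simp; ring
          rw [heq]; exact div_nonneg hnum ht0.le
        have hmem := combo_mem ((0 : ℝ), (0 : ℝ)) ((0 : ℝ), (1 : ℝ)) (-t, t)
          (1 - (x + y) - -x / t) (x + y) (-x / t) ha0 ha1 ha2 (by ring)
        have he : (1 - (x + y) - -x / t) • ((0 : ℝ), (0 : ℝ)) + (x + y) • ((0 : ℝ), (1 : ℝ)) +
            (-x / t) • ((-t, t) : ℝ × ℝ) = ((x, y) : ℝ × ℝ) := by
          rw [Prod.ext_iff]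
          constructor <;> (simp [Prod.smul_mk]; try field_simp; try ring)
        rw [hT3]
        rwa [he] at hmem
      · rcases le_total y (t * x) with hy | hy
        · refine Or.inl (Or.inl ?_)
          have hc2 : 0 ≤ y / t := div_nonneg (by linarith) ht0.le
          have hc1 : 0 ≤ x - y / t := by
            have heq : x - y / t = (t * x - y) / t := by field_simp
            rw [heq]; exact div_nonneg (by linarith) ht0.le
          have hmem := combo_mem ((0 : ℝ), (0 : ℝ)) ((1 : ℝ), (0 : ℝ)) ((1 : ℝ), t)
            (1 - x) (x - y / t) (y / t) (by linarith) hc1 hc2 (by ring)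
          have he : (1 - x) • ((0 : ℝ), (0 : ℝ)) + (x - y / t) • ((1 : ℝ), (0 : ℝ)) +
              (y / t) • (((1 : ℝ), t) : ℝ × ℝ) = ((x, y) : ℝ × ℝ) := by
            rw [Prod.ext_iff]
            constructor <;> (simp [Prod.smul_mk]; try field_simp; try ring)
          rw [hT1]
          rwa [he] at hmem
        · refine Or.inl (Or.inr ?_)
          have hmem := combo_mem ((0 : ℝ), (0 : ℝ)) ((1 : ℝ), t) ((0 : ℝ), (1 : ℝ))
            (1 - x - (y - t * x)) x (y - t * x) (by nlinarith) hx (by linarith) (by ring)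
          have he : (1 - x - (y - t * x)) • ((0 : ℝ), (0 : ℝ)) + x • (((1 : ℝ), t) : ℝ × ℝ) +
              (y - t * x) • ((0 : ℝ), (1 : ℝ)) = ((x, y) : ℝ × ℝ) := by
            rw [Prod.ext_iff]
            constructor <;> (simp [Prod.smul_mk]; try ring)
          rw [hT2]
          rwa [he] at hmem
    have hsub2 : T1 ∪ T2 ∪ T3 ⊆ convexHull ℝ (Set.range Q) := by
      refine Set.union_subset (Set.union_subset ?_ ?_) ?_ <;>
        (apply convexHull_mono; rw [hrange]; rintro p (rfl | rfl | rfl) <;> simp)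
    have hPeq : convexHull ℝ (Set.range Q) = T1 ∪ T2 ∪ T3 :=
      Subset.antisymm (hhullS.trans hcover) hsub2
    have hT1half : T1 ⊆ {p : ℝ × ℝ | (-t) * p.1 + 1 * p.2 ≤ 0} := by
      refine convexHull_min ?_ (convex_halfSpace_le (hlin (-t) 1) 0)
      rintro p (rfl | rfl | rfl) <;> (simp only [mem_setOf_eq]; norm_num; try nlinarith [ht0])
    have hT2half : T2 ⊆ {p : ℝ × ℝ | 0 ≤ (-t) * p.1 + 1 * p.2} := by
      refine convexHull_min ?_ (convex_halfSpace_ge (hlin (-t) 1) 0)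
      rintro p (rfl | rfl | rfl) <;> (simp only [mem_setOf_eq]; norm_num; try nlinarith [ht0, ht1])
    have hT1x : T1 ⊆ {p : ℝ × ℝ | 0 ≤ 1 * p.1 + 0 * p.2} := by
      refine convexHull_min ?_ (convex_halfSpace_ge (hlin 1 0) 0)
      rintro p (rfl | rfl | rfl) <;> (simp only [mem_setOf_eq]; norm_num)
    have hT2x : T2 ⊆ {p : ℝ × ℝ | 0 ≤ 1 * p.1 + 0 * p.2} := by
      refine convexHull_min ?_ (convex_halfSpace_ge (hlin 1 0) 0)
      rintro p (rfl | rfl | rfl) <;> (simp only [mem_setOf_eq]; norm_num)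
    have hT3x : T3 ⊆ {p : ℝ × ℝ | 1 * p.1 + 0 * p.2 ≤ 0} := by
      refine convexHull_min ?_ (convex_halfSpace_le (hlin 1 0) 0)
      rintro p (rfl | rfl | rfl) <;> (simp only [mem_setOf_eq]; norm_num; try nlinarith [ht0])
    have hm2 : MeasurableSet T2 := ((Set.toFinite _).isCompact_convexHull ℝ).isClosed.measurableSet
    have hm3 : MeasurableSet T3 := ((Set.toFinite _).isCompact_convexHull ℝ).isClosed.measurableSet
    have h12 : volume (T1 ∩ T2) = 0 := by
      refine measure_mono_null ?_ (null_line t)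
      rintro p ⟨hp1, hp2⟩
      have a1 := hT1half hp1
      have a2 := hT2half hp2
      simp only [mem_setOf_eq] at a1 a2 ⊢
      linarith
    have hd3 : volume ((T1 ∪ T2) ∩ T3) = 0 := by
      refine measure_mono_null ?_ null_vert
      rintro p ⟨hp12, hp3⟩
      have a3 := hT3x hp3
      simp only [mem_setOf_eq] at a3 ⊢
      rcases hp12 with hp | hp
      · have a1 := hT1x hp; simp only [mem_setOf_eq] at a1; linarith
      · have a2 := hT2x hp; simp only [mem_setOf_eq] at a2; linarith
    rw [hPeq, measure_union₀ hm3.nullMeasurableSet hd3,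
      measure_union₀ hm2.nullMeasurableSet h12, hT1, hT2, hT3, tri_vol, tri_vol, tri_vol]
    norm_num
    rw [abs_of_nonneg ht0.le]
    rw [← ENNReal.ofReal_add (by positivity) (by positivity),
      ← ENNReal.ofReal_add (by positivity) (by positivity)]
    congr 1
    rw [hts]; ring
  · -- triangles small
    intro i j k hij hjk
    fin_cases i <;> fin_cases j <;> fin_cases k <;>
      first
      | exact absurd hij (by decide)
      | exact absurd hjk (by decide)
      | (rw [hQ, tri_vol]
         refine ENNReal.ofReal_le_ofReal ?_
         norm_num [Matrix.cons_val_zero, Matrix.cons_val_one, Matrix.head_cons,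
           Matrix.cons_val_succ]
         try (gcongr
              rw [abs_le]
              constructor <;> nlinarith [h5, h5', htt, ht0, ht1])
         try (rw [← abs_mul]; gcongr; rw [abs_le]; constructor <;> nlinarith [h5, h5', htt, ht0, ht1]))
  · -- Q0 Q1 Q3
    have e0 : Q 0 = ((0 : ℝ), (0 : ℝ)) := rfl
    have e1 : Q 1 = ((1 : ℝ), (0 : ℝ)) := rfl
    have e3 : Q 3 = ((0 : ℝ), (1 : ℝ)) := rfl
    rw [e0, e1, e3, tri_vol]
    norm_num
end

section
/- Let A be an n×n entrywise nonnegative real matrix. Then there exists an n×n entrywise nonnegative real matrix B with the same characteristic polynomial as A and with all row sums equal, i.e., there is a real number α such that for every row index i, the sum of the entries of row i of B equals α. -/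
open Polynomial Matrix Filter Topology

/-- Perron-type lemma. -/
lemma perron {n : ℕ} [NeZero n] (M : Matrix (Fin n) (Fin n) ℝ) (hM : ∀ i j, 0 < M i j) :
    ∃ (ρ : ℝ) (x : Fin n → ℝ), 0 ≤ ρ ∧ ρ ≤ ∑ i, ∑ j, M i j ∧ (∀ i, 0 < x i) ∧
      ∀ i, ∑ j, M i j * x j = ρ * x i := by
  have hn : 0 < n := Nat.pos_of_ne_zero (NeZero.ne n)
  set C : Set (ℝ × (Fin n → ℝ)) :=
    {p | 0 ≤ p.1 ∧ (∀ i, 0 ≤ p.2 i) ∧ (∑ i, p.2 i) = 1 ∧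
      ∀ i, p.1 * p.2 i ≤ ∑ j, M i j * p.2 j} with hCdef
  have hcx : ∀ j, Continuous fun p : ℝ × (Fin n → ℝ) => p.2 j :=
    fun j => (continuous_apply j).comp continuous_snd
  have hclosed : IsClosed C := by
    have : C = {p : ℝ × (Fin n → ℝ) | 0 ≤ p.1} ∩ ((⋂ i, {p | 0 ≤ p.2 i}) ∩
        ({p | (∑ i, p.2 i) = 1} ∩ ⋂ i, {p | p.1 * p.2 i ≤ ∑ j, M i j * p.2 j})) := by
      ext p; simp [hCdef, Set.mem_iInter, and_assoc]
    rw [this]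
    refine (isClosed_le continuous_const continuous_fst).inter (IsClosed.inter ?_ (IsClosed.inter ?_ ?_))
    · exact isClosed_iInter fun i => isClosed_le continuous_const (hcx i)
    · exact isClosed_eq (continuous_finset_sum _ fun i _ => hcx i) continuous_const
    · exact isClosed_iInter fun i => isClosed_le (continuous_fst.mul (hcx i))
        (continuous_finset_sum _ fun j _ => continuous_const.mul (hcx j))
  have hsub : C ⊆ Set.Icc (0, fun _ => 0) (∑ i, ∑ j, M i j, fun _ => 1) := by
    rintro ⟨r, x⟩ ⟨hr, hx, hs, hle⟩
    have hx1 : ∀ j, x j ≤ 1 := by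
      intro j
      rw [← hs]
      exact Finset.single_le_sum (fun i _ => hx i) (Finset.mem_univ j)
    constructor
    · exact ⟨hr, fun i => hx i⟩
    constructor
    · -- r ≤ total sum
      calc r = r * ∑ i, x i := by rw [hs, mul_one]
        _ = ∑ i, r * x i := by rw [Finset.mul_sum]
        _ ≤ ∑ i, ∑ j, M i j * x j := Finset.sum_le_sum fun i _ => hle i
        _ ≤ ∑ i, ∑ j, M i j := by
            refine Finset.sum_le_sum fun i _ => Finset.sum_le_sum fun j _ => ?_
            calc M i j * x j ≤ M i j * 1 :=
                  mul_le_mul_of_nonneg_left (hx1 j) (hM i j).le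
              _ = M i j := mul_one _
    · exact fun j => hx1 j
  have hcomp : IsCompact C := isCompact_Icc.of_isClosed_subset hclosed hsub
  have hne : C.Nonempty := by
    refine ⟨(0, fun _ => (n : ℝ)⁻¹), le_refl 0, fun i => by positivity, ?_, ?_⟩
    · have : (n:ℝ) ≠ 0 := Nat.cast_ne_zero.mpr (NeZero.ne n)
      simp [Finset.sum_const, Finset.card_univ, mul_inv_cancel₀ this]
    · intro i
      simp only [zero_mul]
      exact Finset.sum_nonneg fun j _ => mul_nonneg (hM i j).le (by positivity)
  obtain ⟨⟨ρ, x⟩, hmem, hmax⟩ := hcomp.exists_isMaxOn hne continuous_fst.continuousOn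
  obtain ⟨hρ0, hx0, hxs, hxle⟩ := hmem
  -- y = M x is strictly positive
  set y : Fin n → ℝ := fun i => ∑ j, M i j * x j with hy
  have hypos : ∀ i, 0 < y i := by
    intro i
    obtain ⟨j0, hj0⟩ : ∃ j0, 0 < x j0 := by
      by_contra h
      push_neg at h
      have : (∑ i, x i) ≤ 0 := Finset.sum_nonpos fun j _ => h j
      rw [hxs] at this; linarith
    have : M i j0 * x j0 ≤ y i := by
      show M i j0 * x j0 ≤ ∑ j, M i j * x j
      exact Finset.single_le_sum (f := fun j => M i j * x j)
        (fun j _ => mul_nonneg (hM i j).le (hx0 j)) (Finset.mem_univ j0)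
    nlinarith [hM i j0]
  -- the eigen equation
  have heig : ∀ i, y i = ρ * x i := by
    by_contra h
    push_neg at h
    obtain ⟨i0, hi0⟩ := h
    have hi0' : ρ * x i0 < y i0 := lt_of_le_of_ne (hxle i0) (Ne.symm hi0)
    -- then ρ * y i < (M y) i for every i
    have hstep : ∀ i, ρ * y i < ∑ j, M i j * y j := by
      intro i
      have : ∑ j, M i j * (ρ * x j) < ∑ j, M i j * y j := by
        refine Finset.sum_lt_sum (fun j _ => mul_le_mul_of_nonneg_left (hxle j) (hM i j).le)
          ⟨i0, Finset.mem_univ i0, ?_⟩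
        exact mul_lt_mul_of_pos_left hi0' (hM i i0)
      calc ρ * y i = ∑ j, M i j * (ρ * x j) := by
            rw [hy, Finset.mul_sum]; congr 1; ext j; ring
        _ < ∑ j, M i j * y j := this
    -- get a better ratio r'
    set r' : ℝ := Finset.univ.inf' (Finset.univ_nonempty) (fun i => (∑ j, M i j * y j) / y i)
      with hr'
    have hr'ρ : ρ < r' := by
      rw [hr', Finset.lt_inf'_iff]
      intro i _
      rw [lt_div_iff₀ (hypos i)]
      exact hstep i
    have hr'le : ∀ i, r' * y i ≤ ∑ j, M i j * y j := by
      intro i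
      have : r' ≤ (∑ j, M i j * y j) / y i :=
        Finset.inf'_le _ (Finset.mem_univ i)
      rw [le_div_iff₀ (hypos i)] at this
      linarith
    -- normalize y
    set s : ℝ := ∑ i, y i with hs
    have hspos : 0 < s := Finset.sum_pos (fun i _ => hypos i) Finset.univ_nonempty
    have hmem' : (r', fun i => y i / s) ∈ C := by
      refine ⟨le_trans hρ0 hr'ρ.le, fun i => div_nonneg (hypos i).le hspos.le, ?_, ?_⟩
      · show (∑ i, y i / s) = 1
        rw [← Finset.sum_div, ← hs, div_self hspos.ne']
      · intro i
        show r' * (y i / s) ≤ ∑ j, M i j * (y j / s)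
        have h1 : ∑ j, M i j * (y j / s) = (∑ j, M i j * y j) / s := by
          rw [Finset.sum_div]
          exact Finset.sum_congr rfl fun j _ => by ring
        rw [h1, ← mul_div_assoc]
        gcongr
        exact hr'le i
    have := hmax hmem'
    simp only at this
    exact absurd this (not_le.mpr hr'ρ)
  have hxpos : ∀ i, 0 < x i := by
    intro i
    have hyi := hypos i
    rw [heig i] at hyi
    have hx0' : 0 ≤ x i := hx0 i
    rcases hx0'.lt_or_eq with h | h
    · exact h
    · rw [← h, mul_zero] at hyi; exact absurd hyi (lt_irrefl 0)
  refine ⟨ρ, x, hρ0, ?_, hxpos, fun i => heig i⟩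
  exact (hsub ⟨hρ0, hx0, hxs, hxle⟩).2.1

lemma eval_cp {n : ℕ} (M : Matrix (Fin n) (Fin n) ℝ) (t : ℝ) :
    M.charpoly.eval t = (t • (1 : Matrix (Fin n) (Fin n) ℝ) - M).det := by
  rw [Matrix.charpoly, ← Polynomial.coe_evalRingHom, RingHom.map_det]
  congr 1
  ext i j
  by_cases h : i = j <;>
    simp [h, Matrix.charmatrix_apply_eq, Matrix.charmatrix_apply_ne, Matrix.one_apply]

/-- A positive matrix is "det-cospectral" to a nonnegative matrix with constant row sums. -/
lemma step2 {n : ℕ} [NeZero n] (M : Matrix (Fin n) (Fin n) ℝ) (hM : ∀ i j, 0 < M i j) :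
    ∃ (ρ : ℝ) (B : Matrix (Fin n) (Fin n) ℝ), 0 ≤ ρ ∧ ρ ≤ ∑ i, ∑ j, M i j ∧
      (∀ i j, 0 ≤ B i j) ∧ (∀ i, ∑ j, B i j = ρ) ∧
      ∀ t : ℝ, (t • (1 : Matrix (Fin n) (Fin n) ℝ) - B).det
        = (t • (1 : Matrix (Fin n) (Fin n) ℝ) - M).det := by
  obtain ⟨ρ, x, hρ0, hρle, hx, heig⟩ := perron M hM
  refine ⟨ρ, Matrix.of fun i j => M i j * x j / x i, hρ0, hρle, ?_, ?_, ?_⟩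
  · intro i j
    exact div_nonneg (mul_nonneg (hM i j).le (hx j).le) (hx i).le
  · intro i
    show ∑ j, M i j * x j / x i = ρ
    rw [← Finset.sum_div, heig i, mul_div_assoc, div_self (hx i).ne', mul_one]
  · intro t
    set N : Matrix (Fin n) (Fin n) ℝ := t • (1 : Matrix (Fin n) (Fin n) ℝ) - M with hN
    have key : (t • (1 : Matrix (Fin n) (Fin n) ℝ) - Matrix.of fun i j => M i j * x j / x i)
        = Matrix.of fun i j => (x i)⁻¹ * ((Matrix.of fun a b => x b * N a b) i j) := by
      ext i j
      by_cases h : i = j <;>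
        · simp only [Matrix.sub_apply, Matrix.smul_apply, Matrix.one_apply, Matrix.of_apply,
            hN, smul_eq_mul, h, if_false]
          field_simp [(hx i).ne', (hx j).ne']
          try ring
    rw [key, Matrix.det_mul_column, Matrix.det_mul_row, ← mul_assoc,
      ← Finset.prod_mul_distrib]
    have : ∀ i : Fin n, (x i)⁻¹ * x i = 1 := fun i => inv_mul_cancel₀ (hx i).ne'
    simp [this]

/-- Every nonnegative matrix has the same characteristic polynomial as some
nonnegative matrix whose row sums are all equal. -/
theorem nonneg_matrix_exists_const_row_sum
    (n : ℕ) (A : Matrix (Fin n) (Fin n) ℝ)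
    (hA : ∀ i j, 0 ≤ A i j) :
    ∃ B : Matrix (Fin n) (Fin n) ℝ,
      (∀ i j, 0 ≤ B i j) ∧
      B.charpoly = A.charpoly ∧
      ∃ α : ℝ, ∀ i, ∑ j, B i j = α := by
  rcases Nat.eq_zero_or_pos n with hn | hn
  · subst hn
    exact ⟨A, hA, rfl, 0, fun i => i.elim0⟩
  haveI : NeZero n := ⟨hn.ne'⟩
  -- the perturbed matrices
  set M : ℕ → Matrix (Fin n) (Fin n) ℝ :=
    fun k => Matrix.of fun i j => A i j + ((k : ℝ) + 1)⁻¹ with hM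
  have hMpos : ∀ k, ∀ i j, 0 < M k i j := by
    intro k i j
    have : (0:ℝ) < ((k:ℝ)+1)⁻¹ := by positivity
    have := hA i j
    simpa [hM] using by linarith
  have H : ∀ k, ∃ (ρ : ℝ) (B : Matrix (Fin n) (Fin n) ℝ), 0 ≤ ρ ∧
      ρ ≤ ∑ i, ∑ j, M k i j ∧ (∀ i j, 0 ≤ B i j) ∧ (∀ i, ∑ j, B i j = ρ) ∧
      ∀ t : ℝ, (t • (1 : Matrix (Fin n) (Fin n) ℝ) - B).det
        = (t • (1 : Matrix (Fin n) (Fin n) ℝ) - M k).det :=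
    fun k => step2 (M k) (hMpos k)
  choose ρ B hρ0 hρle hB0 hBsum hBdet using H
  -- uniform bound
  set R : ℝ := (∑ i, ∑ j, A i j) + n * n with hRdef
  have hρR : ∀ k, ρ k ≤ R := by
    intro k
    refine le_trans (hρle k) ?_
    have h1 : ∀ i j : Fin n, M k i j ≤ A i j + 1 := by
      intro i j
      have h2 : ((k:ℝ)+1)⁻¹ ≤ 1 := by
        rw [inv_le_one_iff₀]; right; linarith [Nat.cast_nonneg (α := ℝ) k]
      simp only [hM, Matrix.of_apply]
      linarith
    calc ∑ i, ∑ j, M k i j ≤ ∑ i, ∑ j, (A i j + 1) :=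
          Finset.sum_le_sum fun i _ => Finset.sum_le_sum fun j _ => h1 i j
      _ = (∑ i, ∑ j, A i j) + n * n := by
          simp [Finset.sum_add_distrib, Finset.card_univ]
          try ring
      _ = R := rfl
  have hBR : ∀ k i j, B k i j ≤ R := by
    intro k i j
    refine le_trans ?_ (le_trans (le_of_eq (hBsum k i)) (hρR k))
    exact Finset.single_le_sum (f := fun j => B k i j) (fun j _ => hB0 k i j)
      (Finset.mem_univ j)
  -- compactness
  set K : Set (Fin n → Fin n → ℝ) := Set.Icc (fun _ _ => 0) (fun _ _ => R) with hK
  have hKc : IsCompact K := isCompact_Icc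
  have hmemK : ∀ k, (fun i j => B k i j) ∈ K := by
    intro k
    exact ⟨fun i => fun j => hB0 k i j, fun i => fun j => hBR k i j⟩
  obtain ⟨L, hLK, φ, hφ, hconv⟩ := hKc.tendsto_subseq hmemK
  set Bl : Matrix (Fin n) (Fin n) ℝ := Matrix.of L with hBl
  have hentry : ∀ i j, Tendsto (fun k => B (φ k) i j) atTop (𝓝 (L i j)) := by
    intro i j
    exact ((tendsto_pi_nhds.mp ((tendsto_pi_nhds.mp hconv) i)) j)
  refine ⟨Bl, ?_, ?_, ?_⟩
  · intro i j
    exact hLK.1 i j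
  · -- charpoly equality
    apply Polynomial.funext
    intro t
    rw [eval_cp, eval_cp]
    -- continuity of the det map
    have hdetc : Continuous fun P : Matrix (Fin n) (Fin n) ℝ =>
        (t • (1 : Matrix (Fin n) (Fin n) ℝ) - P).det :=
      (Continuous.matrix_det (continuous_const.sub continuous_id))
    have h1 : Tendsto (fun k => (t • (1 : Matrix (Fin n) (Fin n) ℝ) - B (φ k)).det)
        atTop (𝓝 ((t • (1 : Matrix (Fin n) (Fin n) ℝ) - Bl).det)) :=
      (hdetc.tendsto Bl).comp hconv
    have hMA : Tendsto (fun k => M (φ k)) atTop (𝓝 A) := by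
      apply tendsto_pi_nhds.mpr
      intro i
      rw [tendsto_pi_nhds]
      intro j
      have : Tendsto (fun k : ℕ => ((φ k : ℝ) + 1)⁻¹) atTop (𝓝 0) := by
        apply Tendsto.comp tendsto_inv_atTop_zero
        apply tendsto_atTop_add_const_right
        exact tendsto_natCast_atTop_atTop.comp hφ.tendsto_atTop
      have := (tendsto_const_nhds (x := A i j)).add this
      simpa [hM] using this
    have h2 : Tendsto (fun k => (t • (1 : Matrix (Fin n) (Fin n) ℝ) - M (φ k)).det)
        atTop (𝓝 ((t • (1 : Matrix (Fin n) (Fin n) ℝ) - A).det)) :=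
      (hdetc.tendsto A).comp hMA
    have heq : (fun k => (t • (1 : Matrix (Fin n) (Fin n) ℝ) - B (φ k)).det)
        = fun k => (t • (1 : Matrix (Fin n) (Fin n) ℝ) - M (φ k)).det := by
      funext k; exact hBdet (φ k) t
    rw [heq] at h1
    exact tendsto_nhds_unique h1 h2
  · -- constant row sums
    have i0 : Fin n := ⟨0, hn⟩
    refine ⟨∑ j, L i0 j, ?_⟩
    intro i
    have hsi : ∀ i', Tendsto (fun k => ∑ j, B (φ k) i' j) atTop (𝓝 (∑ j, L i' j)) :=
      fun i' => tendsto_finset_sum _ fun j _ => hentry i' j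
    have hro : (fun k => ∑ j, B (φ k) i j) = fun k => ∑ j, B (φ k) i0 j := by
      funext k
      rw [hBsum (φ k) i, hBsum (φ k) i0]
    have := hsi i
    rw [hro] at this
    exact tendsto_nhds_unique this (hsi i0)
end

section
/- Let A be an n×n complex matrix, let D be an r×r complex matrix with r ≤ n, and let X be an n×r complex matrix of rank r with A·X = X·D. Then for every r×n complex matrix C, the characteristic polynomial of A + X·C multiplied by the characteristic polynomial of D equals the characteristic polynomial of A multiplied by the characteristic polynomial of D + C·X. (Equivalently: if A has eigenvalues λ₁, ..., λₙ and D has eigenvalues λ₁, ..., λᵣ, then A + XC has eigenvalues μ₁, ..., μᵣ, λᵣ₊₁, ..., λₙ, where μ₁, ..., μᵣ are the eigenvalues of D + CX.) -/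
open Polynomial Matrix

lemma det_aux_pert {K : Type*} [Field K] {n r : Type*} [Fintype n] [DecidableEq n]
    [Fintype r] [DecidableEq r]
    (M : Matrix n n K) (N : Matrix r r K) (X : Matrix n r K) (C : Matrix r n K)
    (hM : IsUnit M.det) (hN : IsUnit N.det) (h : M * X = X * N) :
    (M - X * C).det * N.det = M.det * (N - C * X).det := by
  have hXN : M⁻¹ * X = X * N⁻¹ :=
    calc M⁻¹ * X = M⁻¹ * (X * N * N⁻¹) := by
          rw [Matrix.mul_assoc X N, Matrix.mul_nonsing_inv N hN, Matrix.mul_one]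
      _ = M⁻¹ * (M * (X * N⁻¹)) := by rw [← h, Matrix.mul_assoc]
      _ = X * N⁻¹ := by rw [← Matrix.mul_assoc, Matrix.nonsing_inv_mul M hM, Matrix.one_mul]
  have h1 : M - X * C = M * (1 + -(M⁻¹ * X) * C) := by
    rw [Matrix.mul_add, Matrix.mul_one, Matrix.neg_mul, Matrix.mul_neg, ← Matrix.mul_assoc,
      ← Matrix.mul_assoc, Matrix.mul_nonsing_inv M hM, Matrix.one_mul, sub_eq_add_neg]
  have h2 : N - C * X = (1 + C * -(X * N⁻¹)) * N := by
    rw [Matrix.add_mul, Matrix.one_mul, Matrix.mul_neg, Matrix.neg_mul, Matrix.mul_assoc,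
      Matrix.mul_assoc, Matrix.nonsing_inv_mul N hN, Matrix.mul_one, sub_eq_add_neg]
  rw [h1, h2, det_mul, det_mul, Matrix.det_one_add_mul_comm, hXN]
  ring

/-- Rank-`r` perturbation of eigenvalues: if `AX = XD` with `X` of full column
rank `r`, then for any `C`, the eigenvalues of `A + XC` are those of `D + CX`
together with the eigenvalues of `A` other than those of `D`; in terms of
characteristic polynomials,
`charpoly (A + XC) * charpoly D = charpoly A * charpoly (D + CX)`. -/
theorem charpoly_rank_r_perturbation
    (n r : ℕ) (hrn : r ≤ n)
    (A : Matrix (Fin n) (Fin n) ℂ)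
    (D : Matrix (Fin r) (Fin r) ℂ)
    (X : Matrix (Fin n) (Fin r) ℂ)
    (hX : X.rank = r)
    (hAX : A * X = X * D)
    (C : Matrix (Fin r) (Fin n) ℂ) :
    (A + X * C).charpoly * D.charpoly = A.charpoly * (D + C * X).charpoly := by
  classical
  have hinj : Function.Injective (algebraMap (Polynomial ℂ) (RatFunc ℂ)) :=
    IsFractionRing.injective _ _
  apply hinj
  set φ : Polynomial ℂ →+* RatFunc ℂ := (algebraMap (Polynomial ℂ) (RatFunc ℂ)) with hφ
  set ψ : ℂ →+* RatFunc ℂ := φ.comp Polynomial.C with hψ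
  -- mapped charmatrices
  have hcm : ∀ {m : ℕ} (B : Matrix (Fin m) (Fin m) ℂ),
      (charmatrix B).map φ
        = Matrix.scalar (Fin m) (φ Polynomial.X) - B.map ψ := by
    intro m B
    ext i j
    by_cases h : i = j <;>
      simp [h, charmatrix_apply, Matrix.scalar, Matrix.diagonal, hψ]
  have hdet : ∀ {m : ℕ} (B : Matrix (Fin m) (Fin m) ℂ),
      ((charmatrix B).map φ).det = φ B.charpoly := fun B => (RingHom.map_det φ _).symm
  have hu : ∀ {m : ℕ} (B : Matrix (Fin m) (Fin m) ℂ),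
      IsUnit ((charmatrix B).map φ).det := by
    intro m B
    rw [hdet, isUnit_iff_ne_zero]
    exact (map_ne_zero_iff φ hinj).mpr B.charpoly_monic.ne_zero
  -- commutation of mapped charmatrices with X
  have hcomm : (charmatrix A).map φ * X.map ψ = X.map ψ * (charmatrix D).map φ := by
    rw [hcm, hcm, Matrix.sub_mul, Matrix.mul_sub, ← Matrix.map_mul, ← Matrix.map_mul,
      hAX]
    congr 1
    ext i j
    simp [Matrix.mul_apply, Matrix.scalar, Matrix.diagonal, Finset.sum_ite_eq,
      Finset.sum_ite_eq', mul_comm]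
  -- charmatrix of the perturbed matrices
  have hsum1 : (charmatrix (A + X * C)).map φ
      = (charmatrix A).map φ - X.map ψ * C.map ψ := by
    rw [hcm, hcm, Matrix.map_add _ (map_add ψ), Matrix.map_mul, sub_add_eq_sub_sub]
  have hsum2 : (charmatrix (D + C * X)).map φ
      = (charmatrix D).map φ - C.map ψ * X.map ψ := by
    rw [hcm, hcm, Matrix.map_add _ (map_add ψ), Matrix.map_mul, sub_add_eq_sub_sub]
  rw [_root_.map_mul, _root_.map_mul, ← hdet, ← hdet, ← hdet, ← hdet, hsum1, hsum2]
  exact det_aux_pert _ _ _ _ (hu A) (hu D) hcomm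
end

section
/- Let u₃, v₃, u₅, v₅ be real numbers satisfying 1 ≤ u₃ + v₃, u₃ ≤ 1, 0 ≤ u₅ ≤ v₅ ≤ v₃ ≤ 1, and v₃(1 + u₅) − (1 − u₃)v₅ ≤ 1. Then u₃ + u₅ + v₃ ≤ √5. Moreover, equality holds at u₃ = 1 and u₅ = v₅ = v₃ = (√5 − 1)/2, at which point all the constraints are satisfied. -/
/-- Pentagon case optimization: subject to the constraints,
`u₃ + u₅ + v₃ ≤ √5`, with equality at `u₃ = 1`, `u₅ = v₅ = v₃ = (√5 - 1)/2`. -/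
theorem pentagon_optimization
    (u₃ v₃ u₅ v₅ : ℝ)
    (h1 : 1 ≤ u₃ + v₃) (h2 : u₃ ≤ 1)
    (h3 : 0 ≤ u₅) (h4 : u₅ ≤ v₅) (h5 : v₅ ≤ v₃) (h6 : v₃ ≤ 1)
    (h7 : v₃ * (1 + u₅) - (1 - u₃) * v₅ ≤ 1) :
    u₃ + u₅ + v₃ ≤ Real.sqrt 5 ∧
    ((1 : ℝ) + (Real.sqrt 5 - 1) / 2 + (Real.sqrt 5 - 1) / 2 = Real.sqrt 5 ∧
      (1 : ℝ) ≤ 1 + (Real.sqrt 5 - 1) / 2 ∧ (1 : ℝ) ≤ (1 : ℝ) ∧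
      (0 : ℝ) ≤ (Real.sqrt 5 - 1) / 2 ∧
      (Real.sqrt 5 - 1) / 2 ≤ (Real.sqrt 5 - 1) / 2 ∧
      (Real.sqrt 5 - 1) / 2 ≤ (Real.sqrt 5 - 1) / 2 ∧
      (Real.sqrt 5 - 1) / 2 ≤ 1 ∧
      ((Real.sqrt 5 - 1) / 2) * (1 + (Real.sqrt 5 - 1) / 2)
        - (1 - 1) * ((Real.sqrt 5 - 1) / 2) ≤ 1) := by
  have ht2 : Real.sqrt 5 ^ 2 = 5 := Real.sq_sqrt (by norm_num)
  have ht1 : (2:ℝ) ≤ Real.sqrt 5 := by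
    nlinarith [Real.sqrt_nonneg 5, ht2]
  have ht3 : Real.sqrt 5 ≤ 3 := by
    nlinarith [Real.sqrt_nonneg 5, ht2]
  set t := Real.sqrt 5 with htdef
  have hv3 : 0 ≤ v₃ := le_trans (le_trans h3 h4) h5
  -- key: v₃ * (u₃ + u₅) ≤ 1
  have key : v₃ * (u₃ + u₅) ≤ 1 := by nlinarith [mul_nonneg (sub_nonneg.2 h2) (sub_nonneg.2 h5)]
  constructor
  · nlinarith [sq_nonneg (2*v₃ - t + 1), mul_nonneg hv3 (sub_nonneg.2 h6),
      mul_nonneg hv3 (sub_nonneg.2 h2), mul_nonneg hv3 (sub_nonneg.2 (h4.trans h5)),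
      mul_nonneg (sub_nonneg.2 h6) (sub_nonneg.2 ht1)]
  · refine ⟨by ring, by nlinarith, le_refl _, by nlinarith, le_refl _, le_refl _, by nlinarith,
      by nlinarith⟩
end

section
/- Let u₁, v₁, u₂, v₂, u₃, v₃ be real numbers satisfying: 0 ≤ u₁, 0 ≤ 1 − u₁ ≤ v₁ ≤ 1, 0 ≤ u₂ ≤ v₂ ≤ 1, 0 ≤ u₃ ≤ v₃ ≤ 1, v₂ ≤ v₁, v₁ − v₂ + u₂v₁ + u₁v₂ ≤ 1, v₁ − v₃ + u₃v₁ + u₁v₃ ≤ 1, and the convexity conditions u₁ + v₁ ≥ 1, v₂ ≥ v₃, u₃v₂ ≥ u₂v₃, and u₃v₂ − u₂v₃ ≥ u₃ − u₂. Then u₁ + u₂ + v₁ + u₃v₂ − u₂v₃ − 1 ≤ 5/4 (i.e., M₃ ≤ 5/4). -/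
/-- The bound `M₃ ≤ 5/4` in the hexagon case. -/
theorem hexagon_M3_bound
    (u₁ v₁ u₂ v₂ u₃ v₃ : ℝ)
    (hu₁ : 0 ≤ u₁) (h1u₁ : 0 ≤ 1 - u₁) (h1u₁v₁ : 1 - u₁ ≤ v₁) (hv₁ : v₁ ≤ 1)
    (hu₂ : 0 ≤ u₂) (hu₂v₂ : u₂ ≤ v₂) (hv₂ : v₂ ≤ 1)
    (hu₃ : 0 ≤ u₃) (hu₃v₃ : u₃ ≤ v₃) (hv₃ : v₃ ≤ 1)
    (hv₂v₁ : v₂ ≤ v₁)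
    (he : v₁ - v₂ + u₂ * v₁ + u₁ * v₂ ≤ 1)
    (hf : v₁ - v₃ + u₃ * v₁ + u₁ * v₃ ≤ 1)
    (hcx1 : 1 ≤ u₁ + v₁) (hcx2 : v₃ ≤ v₂)
    (hcx3 : u₂ * v₃ ≤ u₃ * v₂) (hcx4 : u₃ - u₂ ≤ u₃ * v₂ - u₂ * v₃) :
    u₁ + u₂ + v₁ + u₃ * v₂ - u₂ * v₃ - 1 ≤ 5 / 4 := by
  have hv₂0 : 0 ≤ v₂ := hu₂.trans hu₂v₂
  have hv₃0 : 0 ≤ v₃ := hu₃.trans hu₃v₃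
  have hv₁0 : 0 ≤ v₁ := hv₂0.trans hv₂v₁
  have hv₃v₁ : v₃ ≤ v₁ := hcx2.trans hv₂v₁
  have hu₂v₁ : u₂ ≤ v₁ := hu₂v₂.trans hv₂v₁
  have hE2 : 0 ≤ 1 - v₁ + (1 - u₁) * v₁ - u₂ * v₁ := by
    nlinarith [mul_nonneg h1u₁ (sub_nonneg.2 hv₂v₁)]
  have hE3 : 0 ≤ 1 - v₁ + (1 - u₁) * v₁ - u₃ * v₁ := by
    nlinarith [mul_nonneg h1u₁ (sub_nonneg.2 hv₃v₁)]
  have key : 0 ≤ v₁ * (5 / 4 + (1 - u₁) - (v₁ + u₃ * v₁ + u₂ - u₂ * u₃)) := by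
    nlinarith [mul_nonneg hu₂ hE2, mul_nonneg (sub_nonneg.2 hu₂v₁) hE3,
      mul_nonneg (mul_nonneg h1u₁ hv₁0) (sub_nonneg.2 hv₁),
      mul_nonneg hv₁0 (sq_nonneg (2 * u₂ - 1))]
  have hF : v₁ + u₃ * v₁ + u₂ - u₂ * u₃ ≤ 5 / 4 + (1 - u₁) := by
    rcases eq_or_lt_of_le hv₁0 with h0 | hpos
    · have hu₂0 : u₂ = 0 := le_antisymm (by linarith) hu₂
      have hu₃v₁' : u₃ * v₁ = 0 := by rw [← h0]; ring
      rw [hu₂0, hu₃v₁']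
      linarith
    · nlinarith [key, mul_pos hpos hpos]
  nlinarith [mul_nonneg hu₂ (sub_nonneg.2 hu₃v₃), mul_nonneg hu₃ (sub_nonneg.2 hv₂v₁), hF]
end

section
/- Let u₁, v, v₂ be real numbers satisfying 0 ≤ u₁ ≤ 1, 5/4 − u₁ ≤ v, v > 0, v·(u₁ + v) ≤ 1, and 1/(u₁ + v) ≤ v₂ ≤ 1. Then (u₁ + v)(1 + v₂) + (1 − u₁v₂)/v − 2 ≤ 5/4, with equality at u₁ = 5/6, v = 2/3, v₂ = 1. -/
/-- Case 2.2 of the hexagon optimization: the bound `k(u₁, v₂, v) ≤ 5/4`,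
with equality at `u₁ = 5/6`, `v = 2/3`, `v₂ = 1`. -/
theorem hexagon_case22
    (u₁ v v₂ : ℝ)
    (hu₁ : 0 ≤ u₁) (hu₁' : u₁ ≤ 1)
    (h1 : 5 / 4 - u₁ ≤ v) (hv : 0 < v)
    (h2 : v * (u₁ + v) ≤ 1)
    (h3 : 1 / (u₁ + v) ≤ v₂) (hv₂ : v₂ ≤ 1) :
    (u₁ + v) * (1 + v₂) + (1 - u₁ * v₂) / v - 2 ≤ 5 / 4 ∧
    ((5 / 6 + 2 / 3 : ℝ) * (1 + 1) + (1 - (5 / 6) * 1) / (2 / 3) - 2 = 5 / 4) := by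
  have hs : (0:ℝ) < u₁ + v := by linarith
  have h3' : 1 ≤ v₂ * (u₁ + v) := by
    rw [div_le_iff₀ hs] at h3; linarith
  constructor
  · have key : (1 - u₁ * v₂) / v ≤ 5 / 4 + 2 - (u₁ + v) * (1 + v₂) := by
      rw [div_le_iff₀ hv]
      rcases le_or_gt 0 (v * (u₁ + v) - u₁) with hc | hc
      · -- v₂ = 1 worst case
        nlinarith [mul_nonneg (sub_nonneg.2 hv₂) hc, sq_nonneg (2*(u₁+v) - 3),
          mul_nonneg (sub_nonneg.2 h2) (by linarith : (0:ℝ) ≤ 8*(u₁+v) - 9)]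
      · -- v₂ = 1/(u₁+v) worst case
        have hp : (v₂ * (u₁ + v) - 1) * (v * (u₁ + v) - u₁) ≤ 0 :=
          mul_nonpos_of_nonneg_of_nonpos (by linarith) hc.le
        have hv1 : u₁ + v - 1 ≤ v := by linarith
        have hq : (u₁ + v) * (u₁ + v) < (u₁ + v) + 1 := by nlinarith
        nlinarith [mul_pos hv hs, mul_pos hv (mul_pos hs hs),
          mul_le_mul_of_nonneg_left hq.le hv.le,
          mul_nonneg hv.le (by linarith : (0:ℝ) ≤ 5/4 * (u₁ + v) - 25/16)]
    linarith
  · norm_num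
end

section
/- Let u₁, v₁, u₂, v₂, u₃, v₃ be real numbers satisfying: 0 ≤ u₁, 0 ≤ 1 − u₁ ≤ v₁ ≤ 1, 0 ≤ u₂ ≤ v₂ ≤ 1, 0 ≤ u₃ ≤ v₃ ≤ 1, the convexity conditions u₁ + v₁ ≥ 1, v₂ ≥ v₃, u₃v₂ ≥ u₂v₃, u₃v₂ − u₂v₃ ≥ u₃ − u₂, and the triangle-area conditions u₂v₁ + u₁v₂ ≤ 1, u₃v₁ + u₁v₃ ≤ 1, v₁ − v₂ + u₂v₁ + u₁v₂ ≤ 1, and v₁ − v₃ + u₃v₁ + u₁v₃ ≤ 1. Then u₁ + u₂ + v₁ + u₃v₂ − u₂v₃ − 1 ≤ 5/4. -/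
set_option maxHeartbeats 1000000

lemma Ci_lem (a v1 v2 : ℝ) (ha : 0 ≤ a) (h21 : v2 ≤ v1) (hv1 : v1 ≤ 1)
    (hR : 5/4 ≤ v1 + v2 - a) : 1 - v1 ≤ v2 * (v1 - a) := by
  nlinarith [mul_nonneg (by linarith : (0:ℝ) ≤ v2 - (5/4 - v1 + a)) (by linarith : (0:ℝ) ≤ v1 - a),
    mul_nonneg ha (by linarith : (0:ℝ) ≤ 2*v1 - 5/4 - a),
    mul_nonneg (by linarith : (0:ℝ) ≤ v1 - 5/8) (by linarith : (0:ℝ) ≤ 13/8 - v1)]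

lemma Cii_lem (a v1 v2 : ℝ) (ha : 0 ≤ a) (h12 : v1 ≤ v2) (hv2 : v2 ≤ 1) (hav : a ≤ v1)
    (hR : 5/4 ≤ v1 + v2 - a) : 1 ≤ v2 * (1 + v1 - a) := by
  nlinarith [mul_nonneg (by linarith : (0:ℝ) ≤ v2 - (5/4 - v1 + a)) (by linarith : (0:ℝ) ≤ 1 + v1 - a),
    mul_nonneg ha (by linarith : (0:ℝ) ≤ v1 + v2 - 5/4 - a),
    mul_nonneg (by linarith : (0:ℝ) ≤ v2 - 5/8) (by linarith : (0:ℝ) ≤ 1 - v2),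
    sq_nonneg (v2 - 5/8), sq_nonneg (v1 - v2), mul_nonneg ha ha]

lemma Ki_lem (a v1 v2 : ℝ) (ha : 0 ≤ a) (h21 : v2 ≤ v1) (hv1 : v1 ≤ 1)
    (hR : 5/4 ≤ v1 + v2 - a) :
    (v1 - a) * (v1*(v1 - a - 5/4) + (1 - v1 + a*v2) + (1 - v1)*v2) - (1 - v1)^2 ≤ 0 := by
  have hav : a ≤ 2*v1 - 5/4 := by linarith
  have t1 : 0 ≤ (v1 - a) * (1 + a - v1) * (v1 - v2) :=
    mul_nonneg (mul_nonneg (by linarith) (by linarith)) (by linarith)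
  rcases le_total v1 (4/5) with h | h
  · nlinarith [t1, sq_nonneg (3*v1 - 2), mul_nonneg ha (by linarith : (0:ℝ) ≤ 1 - 5/4*v1)]
  · nlinarith [t1, sq_nonneg (3*v1 - 2),
      mul_nonneg (by linarith : (0:ℝ) ≤ 2*v1 - 5/4 - a) (by linarith : (0:ℝ) ≤ 5/4*v1 - 1),
      mul_nonneg (by linarith : (0:ℝ) ≤ v1 - 4/5) (by linarith : (0:ℝ) ≤ 1 - v1)]

lemma Kii_lem (a v1 v2 : ℝ) (ha : 0 ≤ a) (h12 : v1 ≤ v2) (hv2 : v2 ≤ 1) (hav : a ≤ v1)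
    (hR : 5/4 ≤ v1 + v2 - a) (hside : 1 - v1 ≤ v1 * (v1 - a)) :
    (v1 - a) * (v1*(v1 - a - 5/4) + (1 - v2 + a*v2) + (1 - v1)*v2) - (1 - v2)*(1 - v1) ≤ 0 := by
  have ha14 : a ≤ v1 - 1/4 := by linarith
  nlinarith [mul_nonneg (mul_nonneg (mul_nonneg (by linarith : (0:ℝ) ≤ v2 - v1) (by linarith : (0:ℝ) ≤ v1 - a)) (by linarith : (0:ℝ) ≤ v1 - a)) (by linarith : (0:ℝ) ≤ 1 - v1),
    mul_nonneg (by linarith : (0:ℝ) ≤ 1 - v2) (sq_nonneg (3*v1 - 2)),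
    mul_nonneg (by linarith : (0:ℝ) ≤ v1*(v1-a) - (1-v1)) (by linarith : (0:ℝ) ≤ v2 - v1),
    mul_nonneg (by linarith : (0:ℝ) ≤ v1*(v1-a) - (1-v1)) (by linarith : (0:ℝ) ≤ 1 - v2),
    mul_nonneg ha (by linarith : (0:ℝ) ≤ v1 - 1/4 - a),
    mul_nonneg (by linarith : (0:ℝ) ≤ v2 - v1) (by linarith : (0:ℝ) ≤ 1 - v2),
    mul_nonneg ha (by linarith : (0:ℝ) ≤ 1 - v1),
    mul_nonneg (by linarith : (0:ℝ) ≤ v1 - a) (by linarith : (0:ℝ) ≤ v2 - v1)]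

lemma Kiii_lem (a v1 v2 : ℝ) (ha : 0 ≤ a) (hv2 : v2 ≤ 1) (hav : a ≤ v1)
    (hR : 5/4 ≤ v1 + v2 - a) (hside : v1 * (1 + v1 - a) ≤ 1) :
    (1 + v1 - a) * (v1*(v1 - a - 5/4) + (1 - v2 + a*v2) + v2) - 1 ≤ 0 := by
  nlinarith [mul_nonneg (mul_nonneg ha (by linarith : (0:ℝ) ≤ 1 + v1 - a)) (by linarith : (0:ℝ) ≤ 1 - v2),
    mul_nonneg (by linarith : (0:ℝ) ≤ 1 + v1 - a - 5/4) (by linarith : (0:ℝ) ≤ 1 - v1*(1+v1-a)),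
    sq_nonneg (1 + v1 - a - 3/2)]

lemma final_step (m v M : ℝ) (hW : m * (v * M - 5/4 * v) ≤ 0) (hp : 1/16 ≤ m * v) :
    M ≤ 5 / 4 := by nlinarith [hW, hp]

lemma Liii2_lem (a v1 v2 : ℝ) (ha : 0 ≤ a) (h12 : v1 ≤ v2) (hv2 : v2 ≤ 1) (hav : a ≤ v1)
    (hR : 5/4 ≤ v1 + v2 - a) (hside : 1 ≤ v1 * (1 + v1 - a)) :
    v1*(v1 - a - 5/4) + 1 + a*v2 - v1 ≤ 0 := by
  nlinarith [hside, mul_nonneg ha (by linarith : (0:ℝ) ≤ 1 - v2), sq_nonneg (v1 - 1),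
    mul_nonneg ha (by linarith : (0:ℝ) ≤ v1 + v2 - 5/4 - a), sq_nonneg (3*v1 - 2),
    mul_nonneg (mul_nonneg ha ha) (by linarith : (0:ℝ) ≤ 1 - v1)]

/-- The combined bound `M ≤ 5/4` for the hexagon case. -/
theorem hexagon_M_bound
    (u₁ v₁ u₂ v₂ u₃ v₃ : ℝ)
    (hu₁ : 0 ≤ u₁) (h1u₁ : 0 ≤ 1 - u₁) (h1u₁v₁ : 1 - u₁ ≤ v₁) (hv₁ : v₁ ≤ 1)
    (hu₂ : 0 ≤ u₂) (hu₂v₂ : u₂ ≤ v₂) (hv₂ : v₂ ≤ 1)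
    (hu₃ : 0 ≤ u₃) (hu₃v₃ : u₃ ≤ v₃) (hv₃ : v₃ ≤ 1)
    (hcx1 : 1 ≤ u₁ + v₁) (hcx2 : v₃ ≤ v₂)
    (hcx3 : u₂ * v₃ ≤ u₃ * v₂) (hcx4 : u₃ - u₂ ≤ u₃ * v₂ - u₂ * v₃)
    (hc : u₂ * v₁ + u₁ * v₂ ≤ 1)
    (hd : u₃ * v₁ + u₁ * v₃ ≤ 1)
    (he : v₁ - v₂ + u₂ * v₁ + u₁ * v₂ ≤ 1)
    (hf : v₁ - v₃ + u₃ * v₁ + u₁ * v₃ ≤ 1) :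
    u₁ + u₂ + v₁ + u₃ * v₂ - u₂ * v₃ - 1 ≤ 5 / 4 := by
  have hv2n : (0:ℝ) ≤ v₂ := hu₂.trans hu₂v₂
  have hv3n : (0:ℝ) ≤ v₃ := hu₃.trans hu₃v₃
  have e1 : 0 ≤ (v₂ - u₂) * (1 - v₃) := mul_nonneg (by linarith) (by linarith)
  have e2 : 0 ≤ (v₃ - u₃) * v₂ := mul_nonneg (by linarith) hv2n
  rcases le_or_gt (u₁ + v₁ + v₂) (9/4) with hRe | hRe
  · nlinarith [e1, e2]
  · have hrr : 5/4 ≤ v₁ + v₂ - (1 - u₁) := by linarith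
    have hva : 1/4 ≤ v₁ - (1 - u₁) := by linarith
    have hv14 : (1:ℝ)/4 ≤ v₁ := by linarith
    have hvan : (0:ℝ) ≤ v₁ - (1 - u₁) := by linarith
    have h1v3 : (0:ℝ) ≤ 1 - v₃ := by linarith
    have hprodA : (1:ℝ)/16 ≤ (v₁ - (1 - u₁)) * v₁ := by nlinarith [hva, hv14]
    have hprodB : (1:ℝ)/4 ≤ (1 + v₁ - (1 - u₁)) * v₁ := by nlinarith [hva, hv14]
    rcases le_total v₂ v₁ with h21 | h12
    · -- Case i : v₂ ≤ v₁
      have p2 : u₂ * v₁ ≤ 1 - v₁ + (1 - u₁) * v₂ := by linarith [he]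
      have p2m : u₂ * v₁ * (1 - v₃) ≤ (1 - v₁ + (1 - u₁) * v₂) * (1 - v₃) :=
        mul_le_mul_of_nonneg_right p2 h1v3
      have q1 : u₂ * v₁ * (1 - v₃) * (v₁ - (1 - u₁)) ≤
          (1 - v₁ + (1 - u₁) * v₂) * (1 - v₃) * (v₁ - (1 - u₁)) :=
        mul_le_mul_of_nonneg_right p2m hvan
      have hCi : 1 - v₁ ≤ v₂ * (v₁ - (1 - u₁)) := Ci_lem (1 - u₁) v₁ v₂ h1u₁ h21 hv₁ hrr
      have hK := Ki_lem (1 - u₁) v₁ v₂ h1u₁ h21 hv₁ hrr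
      rcases le_total (v₃ * (v₁ - (1 - u₁))) (1 - v₁) with hb | hb
      · -- b1 : use u₃ ≤ v₃
        have q2 : u₃ * v₁ * v₂ ≤ v₃ * v₁ * v₂ :=
          mul_le_mul_of_nonneg_right (mul_le_mul_of_nonneg_right hu₃v₃ (by linarith : (0:ℝ) ≤ v₁)) hv2n
        have q2m : u₃ * v₁ * v₂ * (v₁ - (1 - u₁)) ≤ v₃ * v₁ * v₂ * (v₁ - (1 - u₁)) :=
          mul_le_mul_of_nonneg_right q2 hvan
        have q3 : v₃ * (v₁ - (1 - u₁)) * (v₂ * (v₁ - (1 - u₁)) - (1 - v₁)) ≤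
            (1 - v₁) * (v₂ * (v₁ - (1 - u₁)) - (1 - v₁)) :=
          mul_le_mul_of_nonneg_right hb (by linarith)
        have hW : (v₁ - (1 - u₁)) * (v₁ * (u₁ + u₂ + v₁ + u₃ * v₂ - u₂ * v₃ - 1) - 5/4 * v₁) ≤ 0 := by
          linarith [q1, q2m, q3, hK]
        exact final_step _ _ _ hW (by linarith [hprodA])
      · -- b2 : use hf
        have pT : u₃ * v₁ ≤ 1 - v₁ + (1 - u₁) * v₃ := by linarith [hf]
        have pTm : u₃ * v₁ * v₂ ≤ (1 - v₁ + (1 - u₁) * v₃) * v₂ :=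
          mul_le_mul_of_nonneg_right pT hv2n
        have q2m : u₃ * v₁ * v₂ * (v₁ - (1 - u₁)) ≤ (1 - v₁ + (1 - u₁) * v₃) * v₂ * (v₁ - (1 - u₁)) :=
          mul_le_mul_of_nonneg_right pTm hvan
        have q3 : (1 - v₁) * (1 - v₁) ≤ v₃ * (v₁ - (1 - u₁)) * (1 - v₁) :=
          mul_le_mul_of_nonneg_right hb (by linarith)
        have hW : (v₁ - (1 - u₁)) * (v₁ * (u₁ + u₂ + v₁ + u₃ * v₂ - u₂ * v₃ - 1) - 5/4 * v₁) ≤ 0 := by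
          linarith [q1, q2m, q3, hK]
        exact final_step _ _ _ hW (by linarith [hprodA])
    · -- Cases ii/iii : v₁ ≤ v₂
      have p2 : u₂ * v₁ ≤ 1 - v₂ + (1 - u₁) * v₂ := by linarith [hc]
      have p2m : u₂ * v₁ * (1 - v₃) ≤ (1 - v₂ + (1 - u₁) * v₂) * (1 - v₃) :=
        mul_le_mul_of_nonneg_right p2 h1v3
      have hCii : 1 ≤ v₂ * (1 + v₁ - (1 - u₁)) :=
        Cii_lem (1 - u₁) v₁ v₂ h1u₁ h12 hv₂ h1u₁v₁ hrr
      have q2 : u₃ * v₁ * v₂ ≤ v₃ * v₁ * v₂ :=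
        mul_le_mul_of_nonneg_right (mul_le_mul_of_nonneg_right hu₃v₃ (by linarith : (0:ℝ) ≤ v₁)) hv2n
      rcases le_total v₃ v₁ with h31 | h13
      · -- Case ii : v₃ ≤ v₁ ≤ v₂
        rcases le_total (v₃ * (v₁ - (1 - u₁))) (1 - v₁) with hb | hb
        · -- b1
          rcases le_total (v₁ * (1 + v₁ - (1 - u₁))) 1 with hq | hq
          · -- Kiii route
            have hK := Kiii_lem (1 - u₁) v₁ v₂ h1u₁ hv₂ h1u₁v₁ hrr hq
            have q1 : u₂ * v₁ * (1 - v₃) * (1 + v₁ - (1 - u₁)) ≤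
                (1 - v₂ + (1 - u₁) * v₂) * (1 - v₃) * (1 + v₁ - (1 - u₁)) :=
              mul_le_mul_of_nonneg_right p2m (by linarith)
            have q2m : u₃ * v₁ * v₂ * (1 + v₁ - (1 - u₁)) ≤ v₃ * v₁ * v₂ * (1 + v₁ - (1 - u₁)) :=
              mul_le_mul_of_nonneg_right q2 (by linarith)
            have hv3Q : v₃ * (1 + v₁ - (1 - u₁)) ≤ 1 := by nlinarith [hq, mul_le_mul_of_nonneg_right h31 (by linarith : (0:ℝ) ≤ 1 + v₁ - (1 - u₁))]
            have q3 : v₃ * (1 + v₁ - (1 - u₁)) * (v₂ * (1 + v₁ - (1 - u₁)) - 1) ≤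
                1 * (v₂ * (1 + v₁ - (1 - u₁)) - 1) :=
              mul_le_mul_of_nonneg_right hv3Q (by linarith)
            have hW : (1 + v₁ - (1 - u₁)) * (v₁ * (u₁ + u₂ + v₁ + u₃ * v₂ - u₂ * v₃ - 1) - 5/4 * v₁) ≤ 0 := by
              linarith [q1, q2m, q3, hK]
            exact final_step _ _ _ hW (by nlinarith [hprodB])
          · -- Kii route
            have hside : 1 - v₁ ≤ v₁ * (v₁ - (1 - u₁)) := by nlinarith [hq]
            have hK := Kii_lem (1 - u₁) v₁ v₂ h1u₁ h12 hv₂ h1u₁v₁ hrr hside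
            have q1 : u₂ * v₁ * (1 - v₃) * (v₁ - (1 - u₁)) ≤
                (1 - v₂ + (1 - u₁) * v₂) * (1 - v₃) * (v₁ - (1 - u₁)) :=
              mul_le_mul_of_nonneg_right p2m hvan
            have q2m : u₃ * v₁ * v₂ * (v₁ - (1 - u₁)) ≤ v₃ * v₁ * v₂ * (v₁ - (1 - u₁)) :=
              mul_le_mul_of_nonneg_right q2 hvan
            have q3 : v₃ * (v₁ - (1 - u₁)) * (v₂ * (1 + v₁ - (1 - u₁)) - 1) ≤
                (1 - v₁) * (v₂ * (1 + v₁ - (1 - u₁)) - 1) :=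
              mul_le_mul_of_nonneg_right hb (by linarith)
            have hW : (v₁ - (1 - u₁)) * (v₁ * (u₁ + u₂ + v₁ + u₃ * v₂ - u₂ * v₃ - 1) - 5/4 * v₁) ≤ 0 := by
              linarith [q1, q2m, q3, hK]
            exact final_step _ _ _ hW (by linarith [hprodA])
        · -- b2 : use hf, Kii route
          have hside : 1 - v₁ ≤ v₁ * (v₁ - (1 - u₁)) := by
            nlinarith [hb, mul_le_mul_of_nonneg_right h31 hvan]
          have hK := Kii_lem (1 - u₁) v₁ v₂ h1u₁ h12 hv₂ h1u₁v₁ hrr hside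
          have pT : u₃ * v₁ ≤ 1 - v₁ + (1 - u₁) * v₃ := by linarith [hf]
          have pTm : u₃ * v₁ * v₂ ≤ (1 - v₁ + (1 - u₁) * v₃) * v₂ :=
            mul_le_mul_of_nonneg_right pT hv2n
          have q1 : u₂ * v₁ * (1 - v₃) * (v₁ - (1 - u₁)) ≤
              (1 - v₂ + (1 - u₁) * v₂) * (1 - v₃) * (v₁ - (1 - u₁)) :=
            mul_le_mul_of_nonneg_right p2m hvan
          have q2m : u₃ * v₁ * v₂ * (v₁ - (1 - u₁)) ≤ (1 - v₁ + (1 - u₁) * v₃) * v₂ * (v₁ - (1 - u₁)) :=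
            mul_le_mul_of_nonneg_right pTm hvan
          have q3 : (1 - v₁) * (1 - v₂) ≤ v₃ * (v₁ - (1 - u₁)) * (1 - v₂) :=
            mul_le_mul_of_nonneg_right hb (by linarith)
          have hW : (v₁ - (1 - u₁)) * (v₁ * (u₁ + u₂ + v₁ + u₃ * v₂ - u₂ * v₃ - 1) - 5/4 * v₁) ≤ 0 := by
            linarith [q1, q2m, q3, hK]
          exact final_step _ _ _ hW (by linarith [hprodA])
      · -- Case iii : v₁ ≤ v₃ ≤ v₂
        rcases le_total (v₃ * (1 + v₁ - (1 - u₁))) 1 with hb | hb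
        · -- b1 : use u₃ ≤ v₃, Kiii
          have hq : v₁ * (1 + v₁ - (1 - u₁)) ≤ 1 := by
            nlinarith [hb, mul_le_mul_of_nonneg_right h13 (by linarith : (0:ℝ) ≤ 1 + v₁ - (1 - u₁))]
          have hK := Kiii_lem (1 - u₁) v₁ v₂ h1u₁ hv₂ h1u₁v₁ hrr hq
          have q1 : u₂ * v₁ * (1 - v₃) * (1 + v₁ - (1 - u₁)) ≤
              (1 - v₂ + (1 - u₁) * v₂) * (1 - v₃) * (1 + v₁ - (1 - u₁)) :=
            mul_le_mul_of_nonneg_right p2m (by linarith)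
          have q2m : u₃ * v₁ * v₂ * (1 + v₁ - (1 - u₁)) ≤ v₃ * v₁ * v₂ * (1 + v₁ - (1 - u₁)) :=
            mul_le_mul_of_nonneg_right q2 (by linarith)
          have q3 : v₃ * (1 + v₁ - (1 - u₁)) * (v₂ * (1 + v₁ - (1 - u₁)) - 1) ≤
              1 * (v₂ * (1 + v₁ - (1 - u₁)) - 1) :=
            mul_le_mul_of_nonneg_right hb (by linarith)
          have hW : (1 + v₁ - (1 - u₁)) * (v₁ * (u₁ + u₂ + v₁ + u₃ * v₂ - u₂ * v₃ - 1) - 5/4 * v₁) ≤ 0 := by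
            linarith [q1, q2m, q3, hK]
          exact final_step _ _ _ hW (by nlinarith [hprodB])
        · -- b2 : use hd
          have pT : u₃ * v₁ ≤ 1 - v₃ + (1 - u₁) * v₃ := by linarith [hd]
          have pTm : u₃ * v₁ * v₂ ≤ (1 - v₃ + (1 - u₁) * v₃) * v₂ :=
            mul_le_mul_of_nonneg_right pT hv2n
          rcases le_total (v₁ * (1 + v₁ - (1 - u₁))) 1 with hq | hq
          · -- Kiii route
            have hK := Kiii_lem (1 - u₁) v₁ v₂ h1u₁ hv₂ h1u₁v₁ hrr hq
            have q1 : u₂ * v₁ * (1 - v₃) * (1 + v₁ - (1 - u₁)) ≤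
                (1 - v₂ + (1 - u₁) * v₂) * (1 - v₃) * (1 + v₁ - (1 - u₁)) :=
              mul_le_mul_of_nonneg_right p2m (by linarith)
            have q2m : u₃ * v₁ * v₂ * (1 + v₁ - (1 - u₁)) ≤
                (1 - v₃ + (1 - u₁) * v₃) * v₂ * (1 + v₁ - (1 - u₁)) :=
              mul_le_mul_of_nonneg_right pTm (by linarith)
            have hW : (1 + v₁ - (1 - u₁)) * (v₁ * (u₁ + u₂ + v₁ + u₃ * v₂ - u₂ * v₃ - 1) - 5/4 * v₁) ≤ 0 := by
              linarith [q1, q2m, hb, hK]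
            exact final_step _ _ _ hW (by nlinarith [hprodB])
          · -- Liii2 route
            have hL := Liii2_lem (1 - u₁) v₁ v₂ h1u₁ h12 hv₂ h1u₁v₁ hrr hq
            have hW : (1:ℝ) * (v₁ * (u₁ + u₂ + v₁ + u₃ * v₂ - u₂ * v₃ - 1) - 5/4 * v₁) ≤ 0 := by
              linarith [p2m, pTm, hL, h13]
            exact final_step _ _ _ hW (by linarith [hv14])
end
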